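/- arXiv:1806.04220 — 5 statements merged into one kernel-verified Lean document; each statement's English description precedes it below -/
import Mathlib

section
/- For any integer n ≥ 1, any dimension d ≥ 1, and any probability measure μ on the set P_n of nearest-neighbor paths of length n in Z^d starting from the origin, the degree of localization ℓ(μ) and the expected overlap ρ(μ) satisfy ℓ(μ)² ≤ ρ(μ) ≤ ℓ(μ). -/
open MeasureTheory ProbabilityTheory Set

noncomputable section

/-- A nearest-neighbor path of length `n` in `ℤ^d` starting from the origin: `toFun 0` is the
origin, and consecutive vertices are nearest neighbors in `ℤ^d`. The vertices of the path (as in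
the paper, which omits the starting point) are `toFun 1, …, toFun n`. -/
structure PolymerPath (d n : ℕ) where
  toFun : Fin (n + 1) → Fin d → ℤ
  start_eq : toFun 0 = 0
  adj : ∀ k : Fin n, (∑ i, |toFun k.succ i - toFun k.castSucc i|) = 1

/-- The `k`-th vertex `x_k` of a path, for `k = 1, …, n` (indexed by `Fin n`). -/
def PolymerPath.vertex {d n : ℕ} (p : PolymerPath d n) (k : Fin n) : Fin d → ℤ :=
  p.toFun k.succ

/-- The overlap `|p ∩ q|`, i.e. the number of indices `k ∈ {1, …, n}` with `x_k = x_k'`. -/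
def overlap {d n : ℕ} (p q : PolymerPath d n) : ℕ :=
  (Finset.univ.filter fun k : Fin n => p.vertex k = q.vertex k).card

/-- `ℓ(μ, p) = E|P ∩ p| / n` for `P ∼ μ`. -/
def ellAt {d n : ℕ} (μ : PMF (PolymerPath d n)) (p : PolymerPath d n) : ℝ :=
  (∑' q : PolymerPath d n, (μ q).toReal * (overlap q p : ℝ)) / n

/-- The degree of localization `ℓ(μ) = max_{p ∈ 𝒫_n} E|P ∩ p| / n`. -/
def ell {d n : ℕ} (μ : PMF (PolymerPath d n)) : ℝ :=
  ⨆ p : PolymerPath d n, ellAt μ p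

/-- The expected overlap `ρ(μ) = E|P ∩ P'| / n` for `P, P'` independent with law `μ`. -/
def rho {d n : ℕ} (μ : PMF (PolymerPath d n)) : ℝ :=
  (∑' p : PolymerPath d n, ∑' q : PolymerPath d n,
    (μ p).toReal * (μ q).toReal * (overlap p q : ℝ)) / n

namespace PolymerAux

variable {d n : ℕ} (μ : PMF (PolymerPath d n))

/-- real-valued mass function -/
def F (μ : PMF (PolymerPath d n)) : PolymerPath d n → ℝ := fun q => (μ q).toReal

lemma F_nonneg (q : PolymerPath d n) : 0 ≤ F μ q := ENNReal.toReal_nonneg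

lemma F_summable : Summable (F μ) :=
  ENNReal.summable_toReal (by rw [μ.tsum_coe]; exact ENNReal.one_ne_top)

lemma F_tsum : ∑' q, F μ q = 1 := by
  unfold F
  rw [← ENNReal.tsum_toReal_eq (fun q => μ.apply_ne_top q), μ.tsum_coe, ENNReal.toReal_one]

lemma overlap_symm (p q : PolymerPath d n) : overlap p q = overlap q p := by
  unfold overlap
  congr 1
  apply Finset.filter_congr
  intro k _
  simp [eq_comm]

lemma overlap_le (p q : PolymerPath d n) : (overlap p q : ℝ) ≤ n := by
  have : overlap p q ≤ n := by
    calc overlap p q ≤ (Finset.univ : Finset (Fin n)).card := Finset.card_filter_le _ _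
    _ = n := by simp
  exact_mod_cast this

/-- indicator of `q.vertex k = x` -/
def ind (k : Fin n) (x : Fin d → ℤ) (q : PolymerPath d n) : ℝ :=
  if q.vertex k = x then 1 else 0

lemma ind_nonneg (k : Fin n) (x : Fin d → ℤ) (q : PolymerPath d n) : 0 ≤ ind k x q := by
  unfold ind; split <;> norm_num

lemma ind_le_one (k : Fin n) (x : Fin d → ℤ) (q : PolymerPath d n) : ind k x q ≤ 1 := by
  unfold ind; split <;> norm_num

lemma overlap_eq_sum (p q : PolymerPath d n) :
    (overlap q p : ℝ) = ∑ k : Fin n, ind k (p.vertex k) q := by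
  unfold overlap ind
  rw [Finset.card_filter]
  push_cast
  simp [apply_ite]

/-- generic summability for F times a bounded nonneg function -/
lemma summable_F_mul {c : PolymerPath d n → ℝ} {B : ℝ} (h0 : ∀ q, 0 ≤ c q)
    (hB : ∀ q, c q ≤ B) : Summable (fun q => F μ q * c q) := by
  apply Summable.of_nonneg_of_le (fun q => mul_nonneg (F_nonneg μ q) (h0 q))
    (fun q => mul_le_mul_of_nonneg_left (hB q) (F_nonneg μ q))
    ((F_summable μ).mul_right B)

def S (μ : PMF (PolymerPath d n)) (p : PolymerPath d n) : ℝ :=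
  ∑' q, F μ q * (overlap q p : ℝ)

lemma summable_S (p : PolymerPath d n) : Summable (fun q => F μ q * (overlap q p : ℝ)) :=
  summable_F_mul μ (fun q => Nat.cast_nonneg _) (fun q => overlap_le q p)

lemma S_nonneg (p : PolymerPath d n) : 0 ≤ S μ p :=
  tsum_nonneg (fun q => mul_nonneg (F_nonneg μ q) (Nat.cast_nonneg _))

lemma S_le (p : PolymerPath d n) : S μ p ≤ n := by
  calc S μ p ≤ ∑' q, F μ q * n := Summable.tsum_le_tsum
        (fun q => mul_le_mul_of_nonneg_left (overlap_le q p) (F_nonneg μ q))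
        (summable_S μ p) ((F_summable μ).mul_right (n:ℝ))
    _ = (∑' q, F μ q) * n := tsum_mul_right
    _ = n := by rw [F_tsum]; ring

lemma ellAt_eq (p : PolymerPath d n) : ellAt μ p = S μ p / n := rfl

lemma ellAt_nonneg (p : PolymerPath d n) : 0 ≤ ellAt μ p :=
  div_nonneg (S_nonneg μ p) (Nat.cast_nonneg n)

lemma ellAt_le_one (p : PolymerPath d n) (hn : 1 ≤ n) : ellAt μ p ≤ 1 := by
  rw [ellAt_eq]
  rw [div_le_one (by exact_mod_cast hn : (0:ℝ) < n)]
  exact S_le μ p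

lemma bddAbove_ellAt (hn : 1 ≤ n) : BddAbove (Set.range (ellAt μ)) :=
  ⟨1, by rintro _ ⟨p, rfl⟩; exact ellAt_le_one μ p hn⟩

lemma ellAt_le_ell (p : PolymerPath d n) (hn : 1 ≤ n) : ellAt μ p ≤ ell μ :=
  le_ciSup (bddAbove_ellAt μ hn) p

/-- point mass at value x at time k -/
def g (μ : PMF (PolymerPath d n)) (k : Fin n) (x : Fin d → ℤ) : ℝ :=
  ∑' q, F μ q * ind k x q

lemma g_nonneg (k : Fin n) (x : Fin d → ℤ) : 0 ≤ g μ k x :=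
  tsum_nonneg (fun q => mul_nonneg (F_nonneg μ q) (ind_nonneg k x q))

lemma g_le_one (k : Fin n) (x : Fin d → ℤ) : g μ k x ≤ 1 := by
  calc g μ k x ≤ ∑' q, F μ q * 1 := Summable.tsum_le_tsum
        (fun q => mul_le_mul_of_nonneg_left (ind_le_one k x q) (F_nonneg μ q))
        (summable_F_mul μ (ind_nonneg k x) (ind_le_one k x)) ((F_summable μ).mul_right 1)
    _ = 1 := by simp [F_tsum μ]

lemma S_eq_sum_g (p : PolymerPath d n) : S μ p = ∑ k : Fin n, g μ k (p.vertex k) := by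
  unfold S g
  calc ∑' q, F μ q * (overlap q p : ℝ)
      = ∑' q, ∑ k : Fin n, F μ q * ind k (p.vertex k) q := by
        refine tsum_congr fun q => ?_
        rw [overlap_eq_sum, Finset.mul_sum]
    _ = ∑ k : Fin n, ∑' q, F μ q * ind k (p.vertex k) q := by
        refine Summable.tsum_finsetSum fun k _ => summable_F_mul μ (ind_nonneg _ _) (ind_le_one _ _)

/-- numerator of rho -/
lemma rho_num : (∑' p : PolymerPath d n, ∑' q : PolymerPath d n,
    F μ p * F μ q * (overlap p q : ℝ)) = ∑' p, F μ p * S μ p := by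
  refine tsum_congr fun p => ?_
  calc ∑' q, F μ p * F μ q * (overlap p q : ℝ)
      = ∑' q, F μ p * (F μ q * (overlap q p : ℝ)) := by
        refine tsum_congr fun q => ?_
        rw [overlap_symm p q]; ring
    _ = F μ p * S μ p := tsum_mul_left

lemma summable_F_mul_S : Summable (fun p => F μ p * S μ p) :=
  summable_F_mul μ (S_nonneg μ) (S_le μ)

lemma key_ge (k : Fin n) (x : Fin d → ℤ) :
    g μ k x ^ 2 ≤ ∑' p, F μ p * g μ k (p.vertex k) := by
  have h1 : ∀ p, F μ p * ind k x p * g μ k x ≤ F μ p * g μ k (p.vertex k) := by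
    intro p
    unfold ind
    by_cases h : p.vertex k = x
    · simp [h]
    · simp only [h, if_false, mul_zero, zero_mul]
      exact mul_nonneg (F_nonneg μ p) (g_nonneg μ k _)
  have hsum1 : Summable (fun p => F μ p * ind k x p * g μ k x) := by
    have : Summable (fun p => F μ p * (ind k x p * g μ k x)) :=
      summable_F_mul μ (fun p => mul_nonneg (ind_nonneg k x p) (g_nonneg μ k x))
        (fun p => mul_le_one₀ (ind_le_one k x p) (g_nonneg μ k x) (g_le_one μ k x))
    simpa [mul_assoc] using this
  have hsum2 : Summable (fun p => F μ p * g μ k (p.vertex k)) :=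
    summable_F_mul μ (fun p => g_nonneg μ k _) (fun p => g_le_one μ k _)
  calc g μ k x ^ 2 = (∑' p, F μ p * ind k x p) * g μ k x := by rw [← g]; ring
    _ = ∑' p, F μ p * ind k x p * g μ k x := tsum_mul_right.symm
    _ ≤ ∑' p, F μ p * g μ k (p.vertex k) := Summable.tsum_le_tsum h1 hsum1 hsum2

lemma num_ge (p₀ : PolymerPath d n) :
    S μ p₀ ^ 2 / n ≤ ∑' p, F μ p * S μ p := by
  have hn' : (0:ℝ) < n ∨ n = 0 := by
    rcases Nat.eq_zero_or_pos n with h | h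
    · right; exact h
    · left; exact_mod_cast h
  have step1 : ∑' p, F μ p * S μ p = ∑ k : Fin n, ∑' p, F μ p * g μ k (p.vertex k) := by
    calc ∑' p, F μ p * S μ p
        = ∑' p, ∑ k : Fin n, F μ p * g μ k (p.vertex k) := by
          refine tsum_congr fun p => ?_
          rw [S_eq_sum_g, Finset.mul_sum]
      _ = ∑ k : Fin n, ∑' p, F μ p * g μ k (p.vertex k) :=
          Summable.tsum_finsetSum fun k _ => summable_F_mul μ (fun p => g_nonneg μ k _) (fun p => g_le_one μ k _)
  have step2 : ∑ k : Fin n, g μ k (p₀.vertex k) ^ 2 ≤ ∑' p, F μ p * S μ p := by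
    rw [step1]
    exact Finset.sum_le_sum fun k _ => key_ge μ k (p₀.vertex k)
  rcases hn' with h | h
  · have cs : S μ p₀ ^ 2 ≤ n * ∑ k : Fin n, g μ k (p₀.vertex k) ^ 2 := by
      rw [S_eq_sum_g]
      have := sq_sum_le_card_mul_sum_sq (s := (Finset.univ : Finset (Fin n)))
        (f := fun k => g μ k (p₀.vertex k))
      simpa using this
    rw [div_le_iff₀ h]
    calc S μ p₀ ^ 2 ≤ n * ∑ k : Fin n, g μ k (p₀.vertex k) ^ 2 := cs
      _ ≤ n * ∑' p, F μ p * S μ p := by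
          exact mul_le_mul_of_nonneg_left step2 (le_of_lt h)
      _ = (∑' p, F μ p * S μ p) * n := by ring
  · simp only [h, Nat.cast_zero, div_zero]
    exact tsum_nonneg fun p => mul_nonneg (F_nonneg μ p) (S_nonneg μ p)

end PolymerAux

open PolymerAux

/-- Proposition 1.4: `ℓ(μ)² ≤ ρ(μ) ≤ ℓ(μ)`. -/
theorem ell_sq_le_rho_and_rho_le_ell (d n : ℕ) (hd : 1 ≤ d) (hn : 1 ≤ n)
    (μ : PMF (PolymerPath d n)) :
    ell μ ^ 2 ≤ rho μ ∧ rho μ ≤ ell μ := by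
  have hnpos : (0:ℝ) < n := by exact_mod_cast hn
  have hne : Nonempty (PolymerPath d n) := ⟨(μ.support_nonempty).choose⟩
  have hrho : rho μ = (∑' p, F μ p * S μ p) / n := by
    rw [show rho μ = (∑' p : PolymerPath d n, ∑' q : PolymerPath d n,
      F μ p * F μ q * (overlap p q : ℝ)) / n from rfl, rho_num μ]
  have hrho_nonneg : 0 ≤ rho μ := by
    rw [hrho]
    exact div_nonneg (tsum_nonneg fun p => mul_nonneg (F_nonneg μ p) (S_nonneg μ p))
      hnpos.le
  constructor
  · -- ell² ≤ rho
    have key : ∀ p : PolymerPath d n, ellAt μ p ≤ Real.sqrt (rho μ) := by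
      intro p
      have h1 : ellAt μ p ^ 2 ≤ rho μ := by
        rw [ellAt_eq, div_pow, hrho]
        rw [div_le_div_iff₀ (by positivity) hnpos]
        calc S μ p ^ 2 * n = (S μ p ^ 2 / n) * n ^ 2 := by field_simp
          _ ≤ (∑' q, F μ q * S μ q) * n ^ 2 :=
            mul_le_mul_of_nonneg_right (num_ge μ p) (by positivity)
      have := Real.sqrt_le_sqrt (h1)
      rwa [Real.sqrt_sq (ellAt_nonneg μ p)] at this
    have h2 : ell μ ≤ Real.sqrt (rho μ) := Real.iSup_le key (Real.sqrt_nonneg _)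
    calc ell μ ^ 2 ≤ Real.sqrt (rho μ) ^ 2 := by
          apply pow_le_pow_left₀ _ h2
          exact le_trans (ellAt_nonneg μ Classical.ofNonempty) (ellAt_le_ell μ _ hn)
      _ = rho μ := Real.sq_sqrt hrho_nonneg
  · -- rho ≤ ell
    rw [hrho, div_le_iff₀ hnpos]
    calc ∑' p, F μ p * S μ p ≤ ∑' p, F μ p * (n * ell μ) := by
          apply Summable.tsum_le_tsum _ (summable_F_mul_S μ) ((F_summable μ).mul_right _)
          intro p
          apply mul_le_mul_of_nonneg_left _ (F_nonneg μ p)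
          have := ellAt_le_ell μ p hn
          rw [ellAt_eq, div_le_iff₀ hnpos] at this
          calc S μ p ≤ ell μ * n := this
            _ = n * ell μ := by ring
      _ = (∑' p, F μ p) * (n * ell μ) := tsum_mul_right
      _ = ell μ * n := by rw [F_tsum]; ring


end
end

section
/- Under the stated assumptions on the density f, the function h defined by h(x) = (∫_x^b (y − m) f(y) dy)/f(x) is strictly positive at every point of (a,b), and sup_{a<x<b} h(x) < ∞. -/
open MeasureTheory ProbabilityTheory Set

noncomputable section

/-- The mean `m = ∫_a^b x f(x) dx` of the probability density `f` supported on `(a,b)`. -/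
def densityMean (a b : ℝ) (f : ℝ → ℝ) : ℝ :=
  ∫ x in Set.Ioo a b, x * f x

/-- The function `h(x) = (∫_x^b (y − m) f(y) dy) / f(x)` for `x ∈ (a,b)`. -/
def hFun (a b : ℝ) (f : ℝ → ℝ) (x : ℝ) : ℝ :=
  (∫ y in Set.Ioo x b, (y - densityMean a b f) * f y) / f x

/-- Lemma 2.1: under the stated assumptions on the density `f`, the function
`h` is strictly positive everywhere in `(a,b)` and uniformly bounded above. -/
theorem hFun_pos_and_bddAbove (a b : ℝ) (hab : a < b) (f : ℝ → ℝ)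
    (hf_pos : ∀ x ∈ Set.Ioo a b, 0 < f x)
    (hf_zero : ∀ x ∉ Set.Ioo a b, f x = 0)
    (hf_diff : ∀ x ∈ Set.Ioo a b, DifferentiableAt ℝ f x)
    (hf_int : IntegrableOn f (Set.Ioo a b))
    (hf_prob : ∫ x in Set.Ioo a b, f x = 1)
    (hh_diff : ∀ x ∈ Set.Ioo a b, DifferentiableAt ℝ (hFun a b f) x)
    (hh_deriv_bdd : ∃ C : ℝ, ∀ x ∈ Set.Ioo a b, |deriv (hFun a b f) x| ≤ C) :
    (∀ x ∈ Set.Ioo a b, 0 < hFun a b f x) ∧ BddAbove (hFun a b f '' Set.Ioo a b) := by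
  set m := densityMean a b f with hm
  set g : ℝ → ℝ := fun y => (y - m) * f y with hg
  -- integrability of g on any subinterval of Ioo a b
  have hg_int : ∀ s ⊆ Set.Ioo a b, MeasurableSet s → IntegrableOn g s := by
    intro s hs hms
    have h1 : IntegrableOn f s := hf_int.mono_set hs
    refine Integrable.bdd_mul (c := |a - m| + |b - m|) h1 ?_ ?_
    · exact (continuous_id.sub continuous_const).aestronglyMeasurable
    · filter_upwards [ae_restrict_mem hms] with y hy
      have hy' := hs hy
      have : |y - m| ≤ |a - m| + |b - m| := by
        rw [abs_le]
        constructor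
        · linarith [neg_abs_le (a - m), abs_nonneg (b - m), hy'.1]
        · linarith [le_abs_self (b - m), abs_nonneg (a - m), hy'.2]
      simpa [Real.norm_eq_abs] using this
  have hg_int_ab : IntegrableOn g (Set.Ioo a b) := hg_int _ (subset_refl _) measurableSet_Ioo
  -- total integral of g is 0
  have h_total : ∫ y in Set.Ioo a b, g y = 0 := by
    have hyf : IntegrableOn (fun y => y * f y) (Set.Ioo a b) := by
      refine Integrable.bdd_mul (c := |a| + |b|) hf_int ?_ ?_
      · exact continuous_id.aestronglyMeasurable
      · filter_upwards [ae_restrict_mem measurableSet_Ioo] with y hy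
        have : |y| ≤ |a| + |b| := by
          rw [abs_le]
          constructor
          · linarith [neg_abs_le a, abs_nonneg b, hy.1]
          · linarith [le_abs_self b, abs_nonneg a, hy.2]
        simpa [Real.norm_eq_abs] using this
    have hmf : IntegrableOn (fun y => m * f y) (Set.Ioo a b) := hf_int.const_mul m
    have : ∫ y in Set.Ioo a b, g y
        = (∫ y in Set.Ioo a b, y * f y) - ∫ y in Set.Ioo a b, m * f y := by
      rw [← integral_sub hyf hmf]
      congr 1 with y
      ring
    rw [this, integral_const_mul, hf_prob]
    show m - m * 1 = 0
    ring
  -- positivity of the numerator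
  have h_num_pos : ∀ x ∈ Set.Ioo a b, 0 < ∫ y in Set.Ioo x b, g y := by
    intro x hx
    have hsplit : (∫ y in Set.Ioo a x, g y) + (∫ y in Set.Ioo x b, g y) = 0 := by
      have hunion : Set.Ioc a x ∪ Set.Ioo x b = Set.Ioo a b :=
        Set.Ioc_union_Ioo_eq_Ioo hx.1.le hx.2
      have hdisj : Disjoint (Set.Ioc a x) (Set.Ioo x b) := by
        apply Set.disjoint_left.2
        rintro y ⟨_, hy2⟩ ⟨hy3, _⟩
        exact absurd hy3 (not_lt.2 hy2)
      have := setIntegral_union hdisj measurableSet_Ioo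
        (hg_int _ (hunion ▸ Set.subset_union_left) measurableSet_Ioc)
        (hg_int _ (hunion ▸ Set.subset_union_right) measurableSet_Ioo) (f := g) (μ := volume)
      rw [hunion] at this
      rw [← integral_Ioc_eq_integral_Ioo (f := g), ← this, h_total]
    rcases le_or_gt m x with hmx | hxm
    · -- g > 0 on Ioo x b
      refine (setIntegral_pos_iff_support_of_nonneg_ae ?_ (hg_int _ ?_ measurableSet_Ioo)).2 ?_
      · filter_upwards [ae_restrict_mem measurableSet_Ioo] with y hy
        have : (0:ℝ) < f y := hf_pos y ⟨hx.1.trans hy.1, hy.2⟩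
        have : (0:ℝ) ≤ (y - m) * f y := by nlinarith [hy.1]
        exact this
      · exact fun y hy => ⟨hx.1.trans hy.1, hy.2⟩
      · have hsub : Set.Ioo x b ⊆ Function.support g ∩ Set.Ioo x b := by
          intro y hy
          have hfy : 0 < f y := hf_pos y ⟨hx.1.trans hy.1, hy.2⟩
          have : g y ≠ 0 := by
            have : 0 < (y - m) * f y := by nlinarith [hy.1, hmx]
            exact ne_of_gt this
          exact ⟨this, hy⟩
        calc (0:ENNReal) < volume (Set.Ioo x b) := by
              simp [Real.volume_Ioo, hx.2]
          _ ≤ volume (Function.support g ∩ Set.Ioo x b) := measure_mono hsub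
    · -- g < 0 on Ioo a x, so ∫_{Ioo a x} g < 0
      have hneg : ∫ y in Set.Ioo a x, g y < 0 := by
        have hpos : 0 < ∫ y in Set.Ioo a x, (fun y => -g y) y := by
          refine (setIntegral_pos_iff_support_of_nonneg_ae ?_
            ((hg_int _ ?_ measurableSet_Ioo).neg)).2 ?_
          · filter_upwards [ae_restrict_mem measurableSet_Ioo] with y hy
            have hfy : (0:ℝ) < f y := hf_pos y ⟨hy.1, hy.2.trans hx.2⟩
            have : (0:ℝ) ≤ -((y - m) * f y) := by nlinarith [hy.2, hxm]
            exact this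
          · exact fun y hy => ⟨hy.1, hy.2.trans hx.2⟩
          · have hsub : Set.Ioo a x ⊆ Function.support (fun y => -g y) ∩ Set.Ioo a x := by
              intro y hy
              have hfy : 0 < f y := hf_pos y ⟨hy.1, hy.2.trans hx.2⟩
              have : -g y ≠ 0 := by
                have : 0 < -((y - m) * f y) := by nlinarith [hy.2, hxm]
                exact ne_of_gt this
              exact ⟨this, hy⟩
            calc (0:ENNReal) < volume (Set.Ioo a x) := by
                  simp [Real.volume_Ioo, hx.1]
              _ ≤ volume _ := measure_mono hsub
        have : ∫ y in Set.Ioo a x, (fun y => -g y) y = -∫ y in Set.Ioo a x, g y := by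
          simp [integral_neg]
        linarith [hpos, this ▸ hpos]
      linarith
  have h_pos : ∀ x ∈ Set.Ioo a b, 0 < hFun a b f x := by
    intro x hx
    exact div_pos (h_num_pos x hx) (hf_pos x hx)
  refine ⟨h_pos, ?_⟩
  obtain ⟨C, hC⟩ := hh_deriv_bdd
  set x₀ : ℝ := (a + b) / 2 with hx₀
  have hx₀mem : x₀ ∈ Set.Ioo a b := ⟨by linarith, by linarith⟩
  have hC0 : 0 ≤ C := le_trans (abs_nonneg _) (hC x₀ hx₀mem)
  refine ⟨hFun a b f x₀ + C * (b - a), ?_⟩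
  rintro v ⟨x, hx, rfl⟩
  have hlip : ‖hFun a b f x - hFun a b f x₀‖ ≤ C * ‖x - x₀‖ :=
    (convex_Ioo a b).norm_image_sub_le_of_norm_deriv_le hh_diff
      (fun y hy => by simpa [Real.norm_eq_abs] using hC y hy) hx₀mem hx
  have h1 : |x - x₀| ≤ b - a := by
    rw [abs_le]
    constructor <;> simp only [hx₀] <;> linarith [hx.1, hx.2]
  rw [Real.norm_eq_abs, Real.norm_eq_abs] at hlip
  have h2 : C * |x - x₀| ≤ C * (b - a) := mul_le_mul_of_nonneg_left h1 hC0
  have h3 := le_trans (le_abs_self _) hlip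
  linarith

end
end

section
/- If X is a random variable with probability density f, then for any differentiable function g : (a,b) → ℝ such that g and g' are uniformly bounded, Var(g(X)) ≤ K · E(g'(X)²), where K = sup_{a<x<b} |h(x)|. -/
open MeasureTheory ProbabilityTheory Set
open scoped ENNReal

set_option maxHeartbeats 2000000

noncomputable section

lemma sq_setIntegral_le (u : ℝ → ℝ) {c d : ℝ} (hcd : c ≤ d)
    (h1 : IntegrableOn u (Set.Ioc c d)) (h2 : IntegrableOn (fun t => u t ^ 2) (Set.Ioc c d)) :
    (∫ t in Set.Ioc c d, u t) ^ 2 ≤ (d - c) * ∫ t in Set.Ioc c d, u t ^ 2 := by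
  rcases eq_or_lt_of_le hcd with rfl | h
  · simp
  · set μ' := volume.restrict (Set.Ioc c d) with hμ'
    haveI : IsFiniteMeasure μ' := ⟨by
      rw [hμ', Measure.restrict_apply_univ]; exact measure_Ioc_lt_top⟩
    have hμu : (μ' Set.univ).toReal = d - c := by
      rw [hμ', Measure.restrict_apply_univ, Real.volume_Ioc,
        ENNReal.toReal_ofReal (by linarith)]
    set I := ∫ t, u t ∂μ' with hI
    have key : (0:ℝ) ≤ ∫ t, ((d - c) * u t - I) ^ 2 ∂μ' := integral_nonneg fun t => sq_nonneg _
    have expand : ∫ t, ((d - c) * u t - I) ^ 2 ∂μ'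
        = (d - c) ^ 2 * (∫ t, u t ^ 2 ∂μ') - (2 * (d - c) * I) * I + I ^ 2 * (d - c) := by
      have e1 : (fun t => ((d - c) * u t - I) ^ 2)
          = fun t => (d - c) ^ 2 * u t ^ 2 - (2 * (d - c) * I) * u t + I ^ 2 := by
        funext t; ring
      rw [e1, integral_add, integral_sub, integral_const_mul, integral_const_mul,
        integral_const, measureReal_def, hμu, smul_eq_mul]
      · ring
      · exact (h2.const_mul _)
      · exact (h1.const_mul _)
      · exact (h2.const_mul _).sub (h1.const_mul _)
      · exact integrable_const _
    rw [expand] at key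
    nlinarith [key, sq_nonneg I, sq_nonneg (d - c)]

def PInt (f1 G2 : ℝ → ℝ) (x y t : ℝ) : ℝ≥0∞ :=
  ENNReal.ofReal (f1 x) * ENNReal.ofReal (f1 y) * ENNReal.ofReal |y - x| *
    (if min x y < t ∧ t ≤ max x y then ENNReal.ofReal (G2 t) else 0)

theorem tonelli_key (f1 G2 : ℝ → ℝ) (hf1m : Measurable f1) (hf1n : ∀ x, 0 ≤ f1 x)
    (hf1i : Integrable f1) (hxf1i : Integrable (fun x => x * f1 x))
    (t : ℝ) :
    ∫⁻ x, ∫⁻ y, PInt f1 G2 x y t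
      = ENNReal.ofReal (G2 t) *
          ENNReal.ofReal (2 * ((∫ x in Set.Iio t, f1 x) * (∫ y in Set.Ici t, y * f1 y)
            - (∫ x in Set.Iio t, x * f1 x) * (∫ y in Set.Ici t, f1 y))) := by
  set r1 := ∫ y in Set.Ici t, y * f1 y with hr1
  set r2 := ∫ y in Set.Ici t, f1 y with hr2
  set r3 := ∫ x in Set.Iio t, f1 x with hr3
  set r4 := ∫ x in Set.Iio t, x * f1 x with hr4
  set rY : ℝ → ℝ := fun x => if x < t then r1 - x * r2 else x * r3 - r4 with hrY
  have branchlt : ∀ x : ℝ, r1 - x * r2 = ∫ y in Set.Ici t, f1 y * (y - x) := by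
    intro x
    have e : (fun y => f1 y * (y - x)) = fun y => y * f1 y - x * f1 y := funext fun y => by ring
    rw [e, integral_sub hxf1i.integrableOn ((hf1i.const_mul x).integrableOn),
      integral_const_mul, ← hr1, ← hr2]
  have branchge : ∀ x : ℝ, x * r3 - r4 = ∫ y in Set.Iio t, f1 y * (x - y) := by
    intro x
    have e : (fun y => f1 y * (x - y)) = fun y => x * f1 y - y * f1 y := funext fun y => by ring
    rw [e, integral_sub ((hf1i.const_mul x).integrableOn) hxf1i.integrableOn,
      integral_const_mul, ← hr3, ← hr4]
  have rYnn : ∀ x, 0 ≤ rY x := by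
    intro x
    rw [hrY]; dsimp only; split_ifs with hx
    · rw [branchlt x]
      exact setIntegral_nonneg measurableSet_Ici fun y hy =>
        mul_nonneg (hf1n y) (by simp only [Set.mem_Ici] at hy; linarith)
    · push_neg at hx
      rw [branchge x]
      exact setIntegral_nonneg measurableSet_Iio fun y hy =>
        mul_nonneg (hf1n y) (by simp only [Set.mem_Iio] at hy; linarith)
  have inner : ∀ x, ∫⁻ y, PInt f1 G2 x y t
      = ENNReal.ofReal (G2 t) * ENNReal.ofReal (f1 x * rY x) := by
    intro x
    by_cases hx : x < t
    · have hcong : ∀ y, PInt f1 G2 x y t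
          = (Set.Ici t).indicator (fun y => ENNReal.ofReal (G2 t) *
              (ENNReal.ofReal (f1 x) * ENNReal.ofReal (f1 y * (y - x)))) y := by
        intro y
        by_cases hy : t ≤ y
        · rw [Set.indicator_of_mem (Set.mem_Ici.mpr hy)]
          have hcond : min x y < t ∧ t ≤ max x y :=
            ⟨lt_of_le_of_lt (min_le_left _ _) hx, le_trans hy (le_max_right _ _)⟩
          simp only [PInt]
          rw [if_pos hcond, abs_of_nonneg (by linarith : (0:ℝ) ≤ y - x),
            ENNReal.ofReal_mul (hf1n y)]
          ring
        · rw [Set.indicator_of_notMem (fun h => hy (Set.mem_Ici.mp h))]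
          simp only [PInt]
          rw [if_neg, mul_zero]
          rintro ⟨-, h2⟩
          exact absurd h2 (not_le.mpr (max_lt hx (not_le.mp hy)))
      have hint : Integrable (fun y => f1 y * (y - x)) (volume.restrict (Set.Ici t)) := by
        have e : (fun y => f1 y * (y - x)) = fun y => y * f1 y - x * f1 y :=
          funext fun y => by ring
        rw [e]; exact (hxf1i.sub (hf1i.const_mul x)).integrableOn
      have hnn : 0 ≤ᵐ[volume.restrict (Set.Ici t)] fun y => f1 y * (y - x) := by
        filter_upwards [ae_restrict_mem measurableSet_Ici] with y hy
        simp only [Set.mem_Ici] at hy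
        exact mul_nonneg (hf1n y) (by linarith)
      rw [lintegral_congr hcong, lintegral_indicator measurableSet_Ici,
        lintegral_const_mul' _ _ ENNReal.ofReal_ne_top,
        lintegral_const_mul' _ _ ENNReal.ofReal_ne_top,
        ← ofReal_integral_eq_lintegral_ofReal hint hnn, hrY]
      dsimp only
      rw [if_pos hx, branchlt x, ENNReal.ofReal_mul (hf1n x)]
    · push_neg at hx
      have hcong : ∀ y, PInt f1 G2 x y t
          = (Set.Iio t).indicator (fun y => ENNReal.ofReal (G2 t) *
              (ENNReal.ofReal (f1 x) * ENNReal.ofReal (f1 y * (x - y)))) y := by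
        intro y
        by_cases hy : y < t
        · rw [Set.indicator_of_mem (Set.mem_Iio.mpr hy)]
          have hcond : min x y < t ∧ t ≤ max x y :=
            ⟨lt_of_le_of_lt (min_le_right _ _) hy, le_trans hx (le_max_left _ _)⟩
          simp only [PInt]
          rw [if_pos hcond, abs_of_nonpos (by linarith : y - x ≤ 0), neg_sub,
            ENNReal.ofReal_mul (hf1n y)]
          ring
        · rw [Set.indicator_of_notMem (fun h => hy (Set.mem_Iio.mp h))]
          simp only [PInt]
          rw [if_neg, mul_zero]
          rintro ⟨h1, -⟩
          exact absurd h1 (not_lt.mpr (le_min hx (not_lt.mp hy)))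
      have hint : Integrable (fun y => f1 y * (x - y)) (volume.restrict (Set.Iio t)) := by
        have e : (fun y => f1 y * (x - y)) = fun y => x * f1 y - y * f1 y :=
          funext fun y => by ring
        rw [e]; exact ((hf1i.const_mul x).sub hxf1i).integrableOn
      have hnn : 0 ≤ᵐ[volume.restrict (Set.Iio t)] fun y => f1 y * (x - y) := by
        filter_upwards [ae_restrict_mem measurableSet_Iio] with y hy
        simp only [Set.mem_Iio] at hy
        exact mul_nonneg (hf1n y) (by linarith)
      rw [lintegral_congr hcong, lintegral_indicator measurableSet_Iio,
        lintegral_const_mul' _ _ ENNReal.ofReal_ne_top,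
        lintegral_const_mul' _ _ ENNReal.ofReal_ne_top,
        ← ofReal_integral_eq_lintegral_ofReal hint hnn, hrY]
      dsimp only
      rw [if_neg (not_lt.mpr hx), branchge x, ENNReal.ofReal_mul (hf1n x)]
  have hrYm : Measurable rY := by
    rw [hrY]
    exact Measurable.ite measurableSet_Iio
      (measurable_const.sub (measurable_id.mul measurable_const))
      ((measurable_id.mul measurable_const).sub measurable_const)
  have hint2 : Integrable (fun x => f1 x * rY x) := by
    refine Integrable.mono' ((hf1i.const_mul (|r1| + |r4|)).add
      ((hxf1i.abs).const_mul (|r2| + |r3|))) ((hf1m.mul hrYm).aestronglyMeasurable)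
      (Filter.Eventually.of_forall fun x => ?_)
    have h1 : |rY x| ≤ (|r1| + |r4|) + (|r2| + |r3|) * |x| := by
      rw [hrY]; dsimp only; split_ifs with hx
      · have h2 : |r1 - x * r2| ≤ |r1| + |x * r2| := by
          rw [sub_eq_add_neg]; exact (abs_add_le _ _).trans (by rw [abs_neg])
        rw [abs_mul] at h2
        have := abs_nonneg x
        have := abs_nonneg r2
        have := abs_nonneg r3
        have := abs_nonneg r4
        nlinarith
      · have h2 : |x * r3 - r4| ≤ |x * r3| + |r4| := by
          rw [sub_eq_add_neg]; exact (abs_add_le _ _).trans (by rw [abs_neg])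
        rw [abs_mul] at h2
        have := abs_nonneg x
        have := abs_nonneg r1
        have := abs_nonneg r2
        have := abs_nonneg r3
        nlinarith
    have e2 : |x * f1 x| = |x| * f1 x := by rw [abs_mul, abs_of_nonneg (hf1n x)]
    have e3 : ‖f1 x * rY x‖ = f1 x * |rY x| := by
      rw [Real.norm_eq_abs, abs_mul, abs_of_nonneg (hf1n x)]
    rw [e3]
    calc f1 x * |rY x| ≤ f1 x * ((|r1| + |r4|) + (|r2| + |r3|) * |x|) :=
          mul_le_mul_of_nonneg_left h1 (hf1n x)
      _ = (|r1| + |r4|) * f1 x + (|r2| + |r3|) * (|x| * f1 x) := by ring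
      _ = (|r1| + |r4|) * f1 x + (|r2| + |r3|) * |x * f1 x| := by rw [e2]
  have rfinal : ∫ x, f1 x * rY x = 2 * (r3 * r1 - r4 * r2) := by
    have eL : ∫ x in Set.Iio t, f1 x * rY x = r1 * r3 - r2 * r4 := by
      have hEq : Set.EqOn (fun x => f1 x * rY x) (fun x => r1 * f1 x - r2 * (x * f1 x))
          (Set.Iio t) := by
        intro x hx
        simp only [Set.mem_Iio] at hx
        rw [hrY]; dsimp only; rw [if_pos hx]; ring
      rw [setIntegral_congr_fun measurableSet_Iio hEq,
        integral_sub ((hf1i.const_mul r1).integrableOn) ((hxf1i.const_mul r2).integrableOn),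
        integral_const_mul, integral_const_mul, ← hr3, ← hr4]
    have eR : ∫ x in Set.Ici t, f1 x * rY x = r3 * r1 - r4 * r2 := by
      have hEq : Set.EqOn (fun x => f1 x * rY x) (fun x => r3 * (x * f1 x) - r4 * f1 x)
          (Set.Ici t) := by
        intro x hx
        simp only [Set.mem_Ici] at hx
        rw [hrY]; dsimp only; rw [if_neg (not_lt.mpr hx)]; ring
      rw [setIntegral_congr_fun measurableSet_Ici hEq,
        integral_sub ((hxf1i.const_mul r3).integrableOn) ((hf1i.const_mul r4).integrableOn),
        integral_const_mul, integral_const_mul, ← hr1, ← hr2]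
    rw [← intervalIntegral.integral_Iio_add_Ici hint2.integrableOn hint2.integrableOn, eL, eR]
    ring
  calc ∫⁻ x, ∫⁻ y, PInt f1 G2 x y t
      = ∫⁻ x, ENNReal.ofReal (G2 t) * ENNReal.ofReal (f1 x * rY x) := lintegral_congr inner
    _ = ENNReal.ofReal (G2 t) * ∫⁻ x, ENNReal.ofReal (f1 x * rY x) :=
        lintegral_const_mul' _ _ ENNReal.ofReal_ne_top
    _ = ENNReal.ofReal (G2 t) * ENNReal.ofReal (∫ x, f1 x * rY x) := by
        rw [ofReal_integral_eq_lintegral_ofReal hint2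
          (Filter.Eventually.of_forall fun x => mul_nonneg (hf1n x) (rYnn x))]
    _ = _ := by rw [rfinal]

theorem tonelli_core (f1 G2 : ℝ → ℝ) (hf1m : Measurable f1) (hf1n : ∀ x, 0 ≤ f1 x)
    (hf1i : Integrable f1) (hxf1i : Integrable (fun x => x * f1 x))
    (hGm : Measurable G2) :
    ∫⁻ x, ∫⁻ y, ∫⁻ t, PInt f1 G2 x y t
      = ∫⁻ t, ENNReal.ofReal (G2 t) *
          ENNReal.ofReal (2 * ((∫ x in Set.Iio t, f1 x) * (∫ y in Set.Ici t, y * f1 y)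
            - (∫ x in Set.Iio t, x * f1 x) * (∫ y in Set.Ici t, f1 y))) := by
  have hPm : Measurable (fun p : ℝ × ℝ × ℝ => PInt f1 G2 p.1 p.2.1 p.2.2) := by
    simp only [PInt]
    refine Measurable.mul (Measurable.mul (Measurable.mul (f := fun p : ℝ × ℝ × ℝ => ENNReal.ofReal (f1 p.1))
      (g := fun p => ENNReal.ofReal (f1 p.2.1)) ?_ ?_)
      (g := fun p : ℝ × ℝ × ℝ => ENNReal.ofReal |p.2.1 - p.1|) ?_) ?_
    · exact (hf1m.comp measurable_fst).ennreal_ofReal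
    · exact (hf1m.comp (measurable_fst.comp measurable_snd)).ennreal_ofReal
    · exact (((measurable_fst.comp measurable_snd).sub measurable_fst).abs).ennreal_ofReal
    · refine Measurable.ite ?_ ((hGm.comp (measurable_snd.comp measurable_snd)).ennreal_ofReal)
        measurable_const
      rw [Set.setOf_and]
      exact (measurableSet_lt (measurable_fst.min (measurable_fst.comp measurable_snd))
          (measurable_snd.comp measurable_snd)).inter
        (measurableSet_le (measurable_snd.comp measurable_snd)
          (measurable_fst.max (measurable_fst.comp measurable_snd)))
  have swap1 : ∀ x, (∫⁻ y, ∫⁻ t, PInt f1 G2 x y t) = ∫⁻ t, ∫⁻ y, PInt f1 G2 x y t := by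
    intro x
    exact lintegral_lintegral_swap
      ((hPm.comp ((measurable_const.prodMk measurable_id) :
        Measurable fun p : ℝ × ℝ => (x, p))).aemeasurable)
  have hmeas2 : Measurable (Function.uncurry fun x t => ∫⁻ y, PInt f1 G2 x y t) := by
    have h : Measurable (fun q : (ℝ × ℝ) × ℝ => PInt f1 G2 q.1.1 q.2 q.1.2) :=
      hPm.comp ((measurable_fst.fst).prodMk ((measurable_snd).prodMk (measurable_fst.snd)))
    exact h.lintegral_prod_right'
  calc ∫⁻ x, ∫⁻ y, ∫⁻ t, PInt f1 G2 x y t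
      = ∫⁻ x, ∫⁻ t, ∫⁻ y, PInt f1 G2 x y t := lintegral_congr swap1
    _ = ∫⁻ t, ∫⁻ x, ∫⁻ y, PInt f1 G2 x y t := lintegral_lintegral_swap hmeas2.aemeasurable
    _ = _ := lintegral_congr (tonelli_key f1 G2 hf1m hf1n hf1i hxf1i)

/-- Lemma 2.3, Poincaré inequality: if `X` is a random variable with
probability density `f` (i.e. has law `ν = f dx`), then for any differentiable `g : (a,b) → ℝ`
with `g` and `g'` uniformly bounded, `Var(g(X)) ≤ K E(g'(X)²)`, where
`K = sup_{a<x<b} |h(x)|`. -/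
theorem poincare_inequality (a b : ℝ) (hab : a < b) (f : ℝ → ℝ)
    (hf_pos : ∀ x ∈ Set.Ioo a b, 0 < f x)
    (hf_zero : ∀ x ∉ Set.Ioo a b, f x = 0)
    (hf_diff : ∀ x ∈ Set.Ioo a b, DifferentiableAt ℝ f x)
    (ν : Measure ℝ)
    (hν : ν = volume.withDensity fun x => ENNReal.ofReal (f x))
    (hν_prob : IsProbabilityMeasure ν)
    (hh_diff : ∀ x ∈ Set.Ioo a b, DifferentiableAt ℝ (hFun a b f) x)
    (hh_deriv_bdd : ∃ C : ℝ, ∀ x ∈ Set.Ioo a b, |deriv (hFun a b f) x| ≤ C)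
    (g g' : ℝ → ℝ)
    (hg : ∀ x ∈ Set.Ioo a b, HasDerivAt g (g' x) x)
    (hg_bdd : ∃ C : ℝ, ∀ x ∈ Set.Ioo a b, |g x| ≤ C)
    (hg'_bdd : ∃ C : ℝ, ∀ x ∈ Set.Ioo a b, |g' x| ≤ C) :
    variance g ν ≤ (sSup ((fun x => |hFun a b f x|) '' Set.Ioo a b)) * ∫ x, (g' x) ^ 2 ∂ν := by
  classical
  haveI := hν_prob
  have hIoo : MeasurableSet (Set.Ioo a b) := measurableSet_Ioo
  -- basic facts about f
  have hf_nonneg : ∀ x, 0 ≤ f x := fun x => by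
    by_cases hx : x ∈ Set.Ioo a b
    · exact (hf_pos x hx).le
    · rw [hf_zero x hx]
  have f_cont : ContinuousOn f (Set.Ioo a b) := fun x hx =>
    (hf_diff x hx).continuousAt.continuousWithinAt
  have hf_ind : (Set.Ioo a b).indicator f = f := by
    funext x
    by_cases hx : x ∈ Set.Ioo a b
    · rw [Set.indicator_of_mem hx]
    · rw [Set.indicator_of_notMem hx, hf_zero x hx]
  have hf_ae : AEMeasurable f volume := by
    rw [← hf_ind]
    exact (aemeasurable_indicator_iff hIoo).2 (f_cont.aemeasurable hIoo)
  -- measurable pointwise-nice version f1 of f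
  obtain ⟨f0, f0m, f0eq⟩ := id hf_ae
  set f1 : ℝ → ℝ := (Set.Ioo a b).indicator (fun x => max (f0 x) 0) with hf1def
  have hf1m : Measurable f1 := (f0m.max measurable_const).indicator hIoo
  have hff1 : f =ᵐ[volume] f1 := by
    filter_upwards [f0eq] with x hx
    by_cases hmem : x ∈ Set.Ioo a b
    · rw [hf1def, Set.indicator_of_mem hmem, ← hx, max_eq_left (hf_nonneg x)]
    · rw [hf1def, Set.indicator_of_notMem hmem, hf_zero x hmem]
  have hf1n : ∀ x, 0 ≤ f1 x := fun x =>
    Set.indicator_nonneg (fun y _ => le_max_right _ _) x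
  have hf1z : ∀ x ∉ Set.Ioo a b, f1 x = 0 := fun x hx => Set.indicator_of_notMem hx _
  -- total mass one
  have hν_lint : ∫⁻ x, ENNReal.ofReal (f x) = 1 := by
    have h1 : ν Set.univ = 1 := measure_univ
    rw [hν, withDensity_apply _ MeasurableSet.univ, setLIntegral_univ] at h1
    exact h1
  have hf_int : Integrable f := by
    refine ⟨hf_ae.aestronglyMeasurable, ?_⟩
    rw [hasFiniteIntegral_iff_ofReal (Filter.Eventually.of_forall hf_nonneg), hν_lint]
    exact ENNReal.one_lt_top
  have hf1_int : Integrable f1 := hf_int.congr hff1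
  have hf1_one : ∫ x, f1 x = 1 := by
    rw [← integral_congr_ae hff1,
      integral_eq_lintegral_of_nonneg_ae (Filter.Eventually.of_forall hf_nonneg)
        hf_ae.aestronglyMeasurable, hν_lint, ENNReal.toReal_one]
  -- coordinate bound on the support
  set c0 : ℝ := max |a| |b| with hc0def
  have hc0 : ∀ x ∈ Set.Ioo a b, |x| ≤ c0 := by
    intro x hx
    rw [abs_le]
    constructor
    · have h1 := neg_abs_le a
      have h2 := le_max_left |a| |b|
      have := hx.1
      simp only [hc0def]
      linarith
    · have h1 := le_abs_self b
      have h2 := le_max_right |a| |b|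
      have := hx.2
      simp only [hc0def]
      linarith
  have hxf1i : Integrable (fun x => x * f1 x) := by
    refine Integrable.mono' (hf1_int.const_mul c0)
      ((measurable_id.mul hf1m).aestronglyMeasurable)
      (Filter.Eventually.of_forall fun x => ?_)
    rw [Real.norm_eq_abs, abs_mul, abs_of_nonneg (hf1n x)]
    by_cases hx : x ∈ Set.Ioo a b
    · exact mul_le_mul_of_nonneg_right (hc0 x hx) (hf1n x)
    · rw [hf1z x hx, mul_zero, mul_zero]
  -- the function gh = indicator version of g
  have g_cont : ContinuousOn g (Set.Ioo a b) := fun x hx =>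
    ((hg x hx).differentiableAt).continuousAt.continuousWithinAt
  set gh : ℝ → ℝ := (Set.Ioo a b).indicator g with hghdef
  have hgh_ae : AEMeasurable gh volume :=
    (aemeasurable_indicator_iff hIoo).2 (g_cont.aemeasurable hIoo)
  obtain ⟨Cg0, hCg0⟩ := hg_bdd
  set Cg : ℝ := max Cg0 0 with hCgdef
  have hgh_bdd : ∀ x, |gh x| ≤ Cg := by
    intro x
    by_cases hx : x ∈ Set.Ioo a b
    · rw [hghdef, Set.indicator_of_mem hx]
      exact (hCg0 x hx).trans (le_max_left _ _)
    · rw [hghdef, Set.indicator_of_notMem hx, abs_zero]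
      exact le_max_right _ _
  obtain ⟨Cd0, hCd0⟩ := hg'_bdd
  -- G2 = indicator version of g'^2
  set G2 : ℝ → ℝ := (Set.Ioo a b).indicator (fun t => (deriv g t) ^ 2) with hG2def
  have hG2m : Measurable G2 := ((measurable_deriv g).pow_const 2).indicator hIoo
  have hderiv_eq : ∀ t ∈ Set.Ioo a b, deriv g t = g' t := fun t ht => (hg t ht).deriv
  have hG2n : ∀ t, 0 ≤ G2 t := fun t => Set.indicator_nonneg (fun y _ => sq_nonneg _) t
  set CG : ℝ := Cd0 ^ 2 with hCGdef
  have hG2b : ∀ t, G2 t ≤ CG := by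
    intro t
    by_cases ht : t ∈ Set.Ioo a b
    · rw [hG2def, Set.indicator_of_mem ht, hderiv_eq t ht]
      have h1 := hCd0 t ht
      have h2 := abs_nonneg (g' t)
      calc g' t ^ 2 = |g' t| ^ 2 := (sq_abs _).symm
        _ ≤ Cd0 ^ 2 := by nlinarith
    · rw [hG2def, Set.indicator_of_notMem ht]
      exact sq_nonneg _
  have hG2i : Integrable G2 := by
    have hdom : Integrable ((Set.Ioo a b).indicator (fun _ => CG)) volume :=
      IntegrableOn.integrable_indicator
        ((integrableOn_const_iff (C := CG)).mpr (Or.inr measure_Ioo_lt_top)) hIoo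
    refine Integrable.mono' hdom
      hG2m.aestronglyMeasurable (Filter.Eventually.of_forall fun t => ?_)
    rw [Real.norm_eq_abs, abs_of_nonneg (hG2n t)]
    by_cases ht : t ∈ Set.Ioo a b
    · rw [Set.indicator_of_mem ht]
      exact hG2b t
    · rw [Set.indicator_of_notMem ht, hG2def, Set.indicator_of_notMem ht]
  -- cumulative integral A and the weight W
  set A : ℝ → ℝ := fun t => ∫ s in Set.Iic t, G2 s with hAdef
  have hAmono : Monotone A := by
    intro s t hst
    exact setIntegral_mono_set hG2i.integrableOn
      (Filter.Eventually.of_forall fun y => hG2n y)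
      (HasSubset.Subset.eventuallyLE (Set.Iic_subset_Iic.mpr hst))
  have hAm : Measurable A := hAmono.measurable
  set W : ℝ → ℝ → ℝ := fun x y => ∫ s in Set.Ioc (min x y) (max x y), G2 s with hWdef
  have hWeq : ∀ x y : ℝ, W x y = A (max x y) - A (min x y) := by
    intro x y
    have hu : Set.Iic (min x y) ∪ Set.Ioc (min x y) (max x y) = Set.Iic (max x y) :=
      Set.Iic_union_Ioc_eq_Iic min_le_max
    have h2 : A (max x y) = A (min x y) + W x y := by
      rw [hAdef]
      dsimp only
      rw [← hu, setIntegral_union (Set.Iic_disjoint_Ioc le_rfl) measurableSet_Ioc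
        hG2i.integrableOn hG2i.integrableOn]
    rw [h2]; ring
  have hWnn : ∀ x y, 0 ≤ W x y := fun x y =>
    setIntegral_nonneg measurableSet_Ioc fun s _ => hG2n s
  set CW : ℝ := ∫ s, G2 s with hCWdef
  have hCWnn : 0 ≤ CW := integral_nonneg hG2n
  have hWle : ∀ x y, W x y ≤ CW := fun x y =>
    setIntegral_le_integral hG2i (Filter.Eventually.of_forall fun s => hG2n s)
  -- FTC + Cauchy-Schwarz pointwise bound
  have hFTC : ∀ x ∈ Set.Ioo a b, ∀ y ∈ Set.Ioo a b, (g x - g y) ^ 2 ≤ |y - x| * W x y := by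
    have main : ∀ x ∈ Set.Ioo a b, ∀ y ∈ Set.Ioo a b, x ≤ y →
        (g y - g x) ^ 2 ≤ (y - x) * W x y := by
      intro x hx y hy hxy
      have hsub : Set.Icc x y ⊆ Set.Ioo a b := fun t ht =>
        ⟨lt_of_lt_of_le hx.1 ht.1, lt_of_le_of_lt ht.2 hy.2⟩
      have hsub' : Set.Ioc x y ⊆ Set.Ioo a b := Set.Ioc_subset_Icc_self.trans hsub
      have hderint : IntegrableOn (deriv g) (Set.Ioc x y) := by
        refine Integrable.mono' ((integrableOn_const_iff (C := Cd0)).mpr (Or.inr measure_Ioc_lt_top))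
          ((measurable_deriv g).aestronglyMeasurable.restrict) ?_
        filter_upwards [ae_restrict_mem measurableSet_Ioc] with t ht
        rw [Real.norm_eq_abs, hderiv_eq t (hsub' ht)]
        exact hCd0 t (hsub' ht)
      have hint1 : IntegrableOn g' (Set.Ioc x y) :=
        hderint.congr_fun (fun t ht => (hderiv_eq t (hsub' ht))) measurableSet_Ioc
      have hint2 : IntegrableOn (fun t => g' t ^ 2) (Set.Ioc x y) :=
        hG2i.integrableOn.congr_fun
          (fun t ht => by rw [hG2def, Set.indicator_of_mem (hsub' ht), hderiv_eq t (hsub' ht)])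
          measurableSet_Ioc
      have hFTCeq : g y - g x = ∫ t in Set.Ioc x y, g' t := by
        have h1 := intervalIntegral.integral_eq_sub_of_hasDerivAt
          (f := g) (f' := g') (a := x) (b := y)
          (fun t ht => hg t (hsub (by rwa [Set.uIcc_of_le hxy] at ht)))
          ((intervalIntegrable_iff_integrableOn_Ioc_of_le hxy).mpr hint1)
        rw [intervalIntegral.integral_of_le hxy] at h1
        exact h1.symm
      have hCS := sq_setIntegral_le g' hxy hint1 hint2
      have hW : W x y = ∫ t in Set.Ioc x y, g' t ^ 2 := by
        rw [hWdef]
        dsimp only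
        rw [min_eq_left hxy, max_eq_right hxy]
        exact setIntegral_congr_fun measurableSet_Ioc fun t ht => by
          rw [hG2def, Set.indicator_of_mem (hsub' ht), hderiv_eq t (hsub' ht)]
      rw [hFTCeq, hW]
      exact hCS
    intro x hx y hy
    rcases le_total x y with hxy | hyx
    · have h1 := main x hx y hy hxy
      rw [abs_of_nonneg (by linarith : (0:ℝ) ≤ y - x)]
      calc (g x - g y) ^ 2 = (g y - g x) ^ 2 := by ring
        _ ≤ _ := h1
    · have h1 := main y hy x hx hyx
      have hWsymm : W x y = W y x := by
        rw [hWdef]; dsimp only; rw [min_comm, max_comm]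
      rw [abs_of_nonpos (by linarith : y - x ≤ 0), hWsymm]
      calc (g x - g y) ^ 2 ≤ (x - y) * W y x := h1
        _ = -(y - x) * W y x := by ring
    -- variance reduction
  have hν_ac : ν ≪ volume := by rw [hν]; exact withDensity_absolutelyContinuous _ _
  have hν_Ioo : ∀ᵐ x ∂ν, x ∈ Set.Ioo a b := by
    have hz : ν (Set.Ioo a b)ᶜ = 0 := by
      rw [hν, withDensity_apply _ hIoo.compl]
      have hcong : ∀ᵐ x ∂(volume.restrict (Set.Ioo a b)ᶜ), ENNReal.ofReal (f x) = 0 := by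
        filter_upwards [ae_restrict_mem hIoo.compl] with x hx
        rw [hf_zero x hx, ENNReal.ofReal_zero]
      rw [lintegral_congr_ae hcong, lintegral_zero]
    rw [ae_iff]
    exact hz
  have conv : ∀ u : ℝ → ℝ, (∫ x, u x ∂ν) = ∫ x, f x * u x := by
    intro u
    rw [hν]
    have he : (fun x => ENNReal.ofReal (f x)) = fun x => ((f x).toNNReal : ℝ≥0∞) := rfl
    rw [he, integral_withDensity_eq_integral_smul₀ hf_ae.real_toNNReal u]
    refine integral_congr_ae (Filter.Eventually.of_forall fun x => ?_)
    show (f x).toNNReal • u x = f x * u x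
    simp [NNReal.smul_def, Real.coe_toNNReal _ (hf_nonneg x)]
  have hg_ae_gh : g =ᵐ[ν] gh := by
    filter_upwards [hν_Ioo] with x hx
    rw [hghdef, Set.indicator_of_mem hx]
  have hgh_aesm_ν : AEStronglyMeasurable gh ν :=
    (hgh_ae.mono_ac hν_ac).aestronglyMeasurable
  have hg_mem : MemLp g 2 ν := by
    refine MemLp.of_bound (hgh_aesm_ν.congr hg_ae_gh.symm) Cg ?_
    filter_upwards [hν_Ioo] with x hx
    rw [Real.norm_eq_abs]
    exact (hCg0 x hx).trans (le_max_left _ _)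
  set M : ℝ := ∫ x, f1 x * gh x with hM
  set S : ℝ := ∫ x, f1 x * gh x ^ 2 with hS
  have hvar : variance g ν = S - M ^ 2 := by
    rw [variance_eq_sub hg_mem]
    have e1 : ν[g ^ 2] = S := by
      show ∫ x, (g ^ 2) x ∂ν = S
      have e1a : ∀ x, (g ^ 2) x = g x ^ 2 := fun x => rfl
      calc ∫ x, (g ^ 2) x ∂ν = ∫ x, g x ^ 2 ∂ν := by simp only [e1a]
        _ = ∫ x, f x * g x ^ 2 := conv _
        _ = ∫ x, f1 x * gh x ^ 2 := by
            refine integral_congr_ae ?_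
            filter_upwards [hff1] with x hfx
            by_cases hx : x ∈ Set.Ioo a b
            · rw [hfx, hghdef, Set.indicator_of_mem hx]
            · rw [hf_zero x hx] at hfx
              rw [← hfx, hf_zero x hx, zero_mul, zero_mul]
        _ = S := rfl
    have e2 : ν[g] = M := by
      show ∫ x, g x ∂ν = M
      calc ∫ x, g x ∂ν = ∫ x, f x * g x := conv _
        _ = ∫ x, f1 x * gh x := by
            refine integral_congr_ae ?_
            filter_upwards [hff1] with x hfx
            by_cases hx : x ∈ Set.Ioo a b
            · rw [hfx, hghdef, Set.indicator_of_mem hx]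
            · rw [hf_zero x hx] at hfx
              rw [← hfx, hf_zero x hx, zero_mul, zero_mul]
        _ = M := rfl
    rw [e1, e2]
  -- integrability of the basic products
  have int_fgh : Integrable (fun x => f1 x * gh x) := by
    refine Integrable.mono' (hf1_int.const_mul Cg)
      ((hf1m.aemeasurable.mul hgh_ae).aestronglyMeasurable)
      (Filter.Eventually.of_forall fun x => ?_)
    rw [Real.norm_eq_abs, abs_mul, abs_of_nonneg (hf1n x), mul_comm]
    exact mul_le_mul_of_nonneg_right (hgh_bdd x) (hf1n x)
  have int_fgh2 : Integrable (fun x => f1 x * gh x ^ 2) := by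
    refine Integrable.mono' (hf1_int.const_mul (Cg ^ 2))
      ((hf1m.aemeasurable.mul (hgh_ae.mul hgh_ae)).congr ?_ |>.aestronglyMeasurable)
      (Filter.Eventually.of_forall fun x => ?_)
    · refine Filter.Eventually.of_forall fun x => ?_
      simp only [Pi.mul_apply]
      ring
    · rw [Real.norm_eq_abs, abs_mul, abs_of_nonneg (hf1n x), mul_comm]
      refine mul_le_mul_of_nonneg_right ?_ (hf1n x)
      have h1 := hgh_bdd x
      have h2 := abs_nonneg (gh x)
      calc |gh x ^ 2| = |gh x| ^ 2 := abs_pow _ _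
        _ ≤ Cg ^ 2 := by nlinarith
  -- step B : inner expansion
  have innerB : ∀ x, ∫ y, f1 y * (gh x - gh y) ^ 2 = gh x ^ 2 - 2 * gh x * M + S := by
    intro x
    have e : (fun y => f1 y * (gh x - gh y) ^ 2)
        = fun y => (gh x ^ 2) * f1 y - (2 * gh x) * (f1 y * gh y) + f1 y * gh y ^ 2 :=
      funext fun y => by ring
    have hi1 : Integrable (fun y => (gh x ^ 2) * f1 y - (2 * gh x) * (f1 y * gh y)) :=
      (hf1_int.const_mul (gh x ^ 2)).sub (int_fgh.const_mul (2 * gh x))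
    have hi2 : Integrable (fun y => (gh x ^ 2) * f1 y) := hf1_int.const_mul (gh x ^ 2)
    have hi3 : Integrable (fun y => (2 * gh x) * (f1 y * gh y)) := int_fgh.const_mul (2 * gh x)
    rw [e, integral_add hi1 int_fgh2, integral_sub hi2 hi3,
      integral_const_mul, integral_const_mul, hf1_one, ← hM, ← hS]
    ring
  have int_innerB : ∀ x : ℝ, Integrable (fun y => f1 y * (gh x - gh y) ^ 2) := by
    intro x
    have e : (fun y => f1 y * (gh x - gh y) ^ 2)
        = fun y => (gh x ^ 2) * f1 y - (2 * gh x) * (f1 y * gh y) + f1 y * gh y ^ 2 :=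
      funext fun y => by ring
    rw [e]
    exact ((hf1_int.const_mul _).sub (int_fgh.const_mul _)).add int_fgh2
  set T : ℝ := ∫ x, f1 x * (∫ y, f1 y * (gh x - gh y) ^ 2) with hT
  have hTeq : T = 2 * (S - M ^ 2) := by
    rw [hT]
    have e : (fun x => f1 x * (∫ y, f1 y * (gh x - gh y) ^ 2))
        = fun x => f1 x * gh x ^ 2 - (2 * M) * (f1 x * gh x) + S * f1 x := by
      funext x
      rw [innerB x]
      ring
    have hi1 : Integrable (fun x => f1 x * gh x ^ 2 - (2 * M) * (f1 x * gh x)) :=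
      int_fgh2.sub (int_fgh.const_mul (2 * M))
    have hi3 : Integrable (fun x => (2 * M) * (f1 x * gh x)) := int_fgh.const_mul (2 * M)
    rw [e, integral_add hi1 (hf1_int.const_mul S), integral_sub int_fgh2 hi3,
      integral_const_mul, integral_const_mul, hf1_one, ← hM, ← hS]
    ring
  -- measurability of W in second variable
  have hWm : ∀ x : ℝ, Measurable (fun y => W x y) := by
    intro x
    have e : (fun y => W x y) = fun y => A (max x y) - A (min x y) := funext fun y => hWeq x y
    rw [e]
    exact (hAm.comp (measurable_const.max measurable_id)).sub
      (hAm.comp (measurable_const.min measurable_id))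
  have habs_bound : ∀ x y : ℝ, |y - x| ≤ |y| + |x| := by
    intro x y
    rw [sub_eq_add_neg]
    exact (abs_add_le _ _).trans (by rw [abs_neg])
  have hc0nn : 0 ≤ c0 := le_trans (abs_nonneg a) (le_max_left _ _)
  have int_inner' : ∀ x : ℝ, Integrable (fun y => f1 y * (|y - x| * W x y)) := by
    intro x
    refine Integrable.mono' (hf1_int.const_mul ((|x| + c0) * CW))
      ((hf1m.mul (((measurable_id.sub measurable_const).abs).mul (hWm x))).aestronglyMeasurable)
      (Filter.Eventually.of_forall fun y => ?_)
    rw [Real.norm_eq_abs,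
      abs_of_nonneg (mul_nonneg (hf1n y) (mul_nonneg (abs_nonneg _) (hWnn x y)))]
    by_cases hy : y ∈ Set.Ioo a b
    · have h1 : |y - x| ≤ |x| + c0 := by
        have h2 := habs_bound x y
        have h3 := hc0 y hy
        linarith
      calc f1 y * (|y - x| * W x y) ≤ f1 y * ((|x| + c0) * CW) := by
            refine mul_le_mul_of_nonneg_left ?_ (hf1n y)
            exact mul_le_mul h1 (hWle x y) (hWnn x y) (by positivity)
        _ = (|x| + c0) * CW * f1 y := by ring
    · simp [hf1z y hy]
  have hInn'nn : ∀ x, 0 ≤ ∫ y, f1 y * (|y - x| * W x y) := fun x =>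
    integral_nonneg fun y => mul_nonneg (hf1n y) (mul_nonneg (abs_nonneg _) (hWnn x y))
  have hInn'le : ∀ x ∈ Set.Ioo a b, (∫ y, f1 y * (|y - x| * W x y)) ≤ (b - a) * CW := by
    intro x hx
    have h2 : (∫ y, f1 y * ((b - a) * CW)) = (b - a) * CW := by
      rw [integral_mul_const, hf1_one, one_mul]
    refine le_trans (integral_mono (int_inner' x) (hf1_int.mul_const ((b - a) * CW))
      fun y => ?_) (le_of_eq h2)
    by_cases hy : y ∈ Set.Ioo a b
    · refine mul_le_mul_of_nonneg_left ?_ (hf1n y)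
      have h3 : |y - x| ≤ b - a := by
        rw [abs_le]
        constructor
        · have := hx.2; have := hy.1; linarith
        · have := hx.1; have := hy.2; linarith
      exact mul_le_mul h3 (hWle x y) (hWnn x y) (by linarith)
    · simp [hf1z y hy]
  have hprod_meas : AEStronglyMeasurable (fun x => ∫ y, f1 y * (|y - x| * W x y)) volume := by
    have hFm : Measurable (fun p : ℝ × ℝ =>
        f1 p.2 * (|p.2 - p.1| * (A (max p.1 p.2) - A (min p.1 p.2)))) :=
      (hf1m.comp measurable_snd).mul
        (((measurable_snd.sub measurable_fst).abs).mul
          ((hAm.comp (measurable_fst.max measurable_snd)).sub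
            (hAm.comp (measurable_fst.min measurable_snd))))
    have h1 := hFm.aestronglyMeasurable.integral_prod_right'
      (ν := (volume : Measure ℝ)) (μ := (volume : Measure ℝ))
    have e : (fun x => ∫ y, f1 y * (|y - x| * (A (max x y) - A (min x y))))
        = fun x => ∫ y, f1 y * (|y - x| * W x y) := by
      funext x
      exact integral_congr_ae (Filter.Eventually.of_forall fun y =>
        congrArg (fun z => f1 y * (|y - x| * z)) (hWeq x y).symm)
    rw [← e]
    exact h1
  have int_outer' : Integrable (fun x => f1 x * (∫ y, f1 y * (|y - x| * W x y))) := by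
    refine Integrable.mono' (hf1_int.const_mul ((b - a) * CW))
      (hf1m.aestronglyMeasurable.mul hprod_meas)
      (Filter.Eventually.of_forall fun x => ?_)
    rw [Real.norm_eq_abs, abs_mul, abs_of_nonneg (hf1n x), abs_of_nonneg (hInn'nn x), mul_comm]
    by_cases hx : x ∈ Set.Ioo a b
    · exact mul_le_mul_of_nonneg_right (hInn'le x hx) (hf1n x)
    · rw [hf1z x hx, mul_zero, mul_zero]
  have int_outerT : Integrable (fun x => f1 x * (∫ y, f1 y * (gh x - gh y) ^ 2)) := by
    have e : (fun x => f1 x * (∫ y, f1 y * (gh x - gh y) ^ 2))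
        = fun x => f1 x * gh x ^ 2 - (2 * M) * (f1 x * gh x) + S * f1 x := by
      funext x
      rw [innerB x]
      ring
    rw [e]
    exact (int_fgh2.sub (int_fgh.const_mul (2 * M))).add (hf1_int.const_mul S)
  set T' : ℝ := ∫ x, f1 x * (∫ y, f1 y * (|y - x| * W x y)) with hT'
  have hTle : T ≤ T' := by
    rw [hT, hT']
    refine integral_mono int_outerT int_outer' fun x => ?_
    by_cases hx : x ∈ Set.Ioo a b
    · refine mul_le_mul_of_nonneg_left ?_ (hf1n x)
      refine integral_mono (int_innerB x) (int_inner' x) fun y => ?_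
      by_cases hy : y ∈ Set.Ioo a b
      · refine mul_le_mul_of_nonneg_left ?_ (hf1n y)
        have e1 : gh x = g x := by rw [hghdef]; exact Set.indicator_of_mem hx g
        have e2 : gh y = g y := by rw [hghdef]; exact Set.indicator_of_mem hy g
        rw [e1, e2]
        exact hFTC x hx y hy
      · rw [hf1z y hy, zero_mul, zero_mul]
    · rw [hf1z x hx, zero_mul, zero_mul]
  -- convert T' into the triple lintegral
  have hPt : ∀ x y : ℝ, ∫⁻ t, PInt f1 G2 x y t
      = ENNReal.ofReal (f1 x) * ENNReal.ofReal (f1 y * (|y - x| * W x y)) := by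
    intro x y
    have e : ∀ t, PInt f1 G2 x y t
        = (ENNReal.ofReal (f1 x) * ENNReal.ofReal (f1 y) * ENNReal.ofReal |y - x|) *
          ((Set.Ioc (min x y) (max x y)).indicator (fun t => ENNReal.ofReal (G2 t)) t) := by
      intro t
      by_cases ht : t ∈ Set.Ioc (min x y) (max x y)
      · rw [Set.indicator_of_mem ht]
        simp only [PInt]
        rw [if_pos (Set.mem_Ioc.mp ht)]
      · rw [Set.indicator_of_notMem ht]
        simp only [PInt]
        rw [if_neg (fun hc => ht (Set.mem_Ioc.mpr hc)), mul_zero]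
    rw [lintegral_congr e,
      lintegral_const_mul' _ _ (ENNReal.mul_ne_top
        (ENNReal.mul_ne_top ENNReal.ofReal_ne_top ENNReal.ofReal_ne_top)
        ENNReal.ofReal_ne_top),
      lintegral_indicator measurableSet_Ioc]
    have hWc : ∫ t in Set.Ioc (min x y) (max x y), G2 t = W x y := by rw [hWdef]
    rw [← ofReal_integral_eq_lintegral_ofReal hG2i.integrableOn
      (Filter.Eventually.of_forall fun t => hG2n t), hWc,
      ENNReal.ofReal_mul (hf1n y), ENNReal.ofReal_mul (abs_nonneg (y - x))]
    ring
  have hconv2 : ENNReal.ofReal T' = ∫⁻ x, ∫⁻ y, ∫⁻ t, PInt f1 G2 x y t := by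
    rw [hT', ofReal_integral_eq_lintegral_ofReal int_outer'
      (Filter.Eventually.of_forall fun x => mul_nonneg (hf1n x) (hInn'nn x))]
    refine lintegral_congr fun x => ?_
    rw [ENNReal.ofReal_mul (hf1n x),
      ofReal_integral_eq_lintegral_ofReal (int_inner' x)
        (Filter.Eventually.of_forall fun y =>
          mul_nonneg (hf1n y) (mul_nonneg (abs_nonneg _) (hWnn x y))),
      ← lintegral_const_mul' _ _ ENNReal.ofReal_ne_top]
    exact lintegral_congr fun y => (hPt x y).symm
  -- the constant K
  obtain ⟨Ch, hCh⟩ := hh_deriv_bdd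
  have x0mem : (a + b) / 2 ∈ Set.Ioo a b := ⟨by linarith, by linarith⟩
  have hhub : ∀ x ∈ Set.Ioo a b,
      |hFun a b f x| ≤ |hFun a b f ((a + b) / 2)| + Ch * (b - a) := by
    intro x hx
    have h2 := Convex.norm_image_sub_le_of_norm_deriv_le (𝕜 := ℝ) (f := hFun a b f)
      (fun z hz => hh_diff z hz) (fun z hz => by rw [Real.norm_eq_abs]; exact hCh z hz)
      (convex_Ioo a b) x0mem hx
    rw [Real.norm_eq_abs, Real.norm_eq_abs] at h2
    have h3 : |x - (a + b) / 2| ≤ b - a := by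
      rw [abs_le]
      constructor
      · have := hx.1; linarith
      · have := hx.2; linarith
    have h4 : |hFun a b f x| - |hFun a b f ((a + b) / 2)|
        ≤ |hFun a b f x - hFun a b f ((a + b) / 2)| := abs_sub_abs_le_abs_sub _ _
    have hCh0 : 0 ≤ Ch := le_trans (abs_nonneg _) (hCh _ x0mem)
    nlinarith
  have hbdd : BddAbove ((fun x => |hFun a b f x|) '' Set.Ioo a b) := by
    refine ⟨|hFun a b f ((a + b) / 2)| + Ch * (b - a), ?_⟩
    rintro - ⟨x, hx, rfl⟩
    exact hhub x hx
  have hKb : ∀ x ∈ Set.Ioo a b,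
      |hFun a b f x| ≤ sSup ((fun x => |hFun a b f x|) '' Set.Ioo a b) :=
    fun x hx => le_csSup hbdd ⟨x, hx, rfl⟩
  set K : ℝ := sSup ((fun x => |hFun a b f x|) '' Set.Ioo a b) with hKdef
  have hKnn : 0 ≤ K := le_trans (abs_nonneg _) (hKb _ x0mem)
  -- integrability of x * f and g-products w.r.t. original f
  have hxfe : (fun x => x * f1 x) =ᵐ[volume] fun x => x * f x := by
    filter_upwards [hff1] with x hx
    rw [hx]
  have hxfi : Integrable (fun x => x * f x) := hxf1i.congr hxfe
  have hm1 : densityMean a b f = ∫ x, x * f1 x := by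
    have e0 : densityMean a b f = ∫ x in Set.Ioo a b, x * f x := rfl
    rw [e0, setIntegral_eq_integral_of_forall_compl_eq_zero
      (fun x hx => by rw [hf_zero x hx, mul_zero])]
    exact integral_congr_ae (hff1.mono fun x hx => show x * f x = x * f1 x by rw [hx])
  -- beta bound, a.e. in t
  have hbeta_le : ∀ᵐ t, ENNReal.ofReal (G2 t) *
      ENNReal.ofReal (2 * ((∫ x in Set.Iio t, f1 x) * (∫ y in Set.Ici t, y * f1 y)
        - (∫ x in Set.Iio t, x * f1 x) * (∫ y in Set.Ici t, f1 y)))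
      ≤ ENNReal.ofReal (G2 t) * ENNReal.ofReal (2 * (K * f1 t)) := by
    filter_upwards [hff1] with t hft
    by_cases ht : t ∈ Set.Ioo a b
    · refine mul_le_mul_right (ENNReal.ofReal_le_ofReal ?_) _
      set Ft := ∫ x in Set.Iio t, f1 x with hFt
      set Yt := ∫ y in Set.Ici t, y * f1 y with hYt
      set Xt := ∫ x in Set.Iio t, x * f1 x with hXt
      set Bt := ∫ y in Set.Ici t, f1 y with hBt
      have hsplit1 : Ft + Bt = 1 := by
        rw [hFt, hBt, intervalIntegral.integral_Iio_add_Ici hf1_int.integrableOn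
          hf1_int.integrableOn, hf1_one]
      have hsplit2 : Xt + Yt = densityMean a b f := by
        rw [hXt, hYt, intervalIntegral.integral_Iio_add_Ici hxf1i.integrableOn
          hxf1i.integrableOn, ← hm1]
      have hIset : Set.Ici t ∩ Set.Ioo a b = Set.Ico t b := by
        refine Set.ext fun y => ?_
        simp only [Set.mem_inter_iff, Set.mem_Ici, Set.mem_Ioo, Set.mem_Ico]
        constructor
        · rintro ⟨h1, _, h3⟩; exact ⟨h1, h3⟩
        · rintro ⟨h1, h2⟩; exact ⟨h1, lt_of_lt_of_le ht.1 h1, h2⟩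
      have hBt2 : Bt = ∫ y in Set.Ioo t b, f y := by
        have hfs : ∀ᵐ y, y ∈ Set.Ici t → f1 y = f y := by
          filter_upwards [hff1] with y hy
          exact fun _ => hy.symm
        rw [hBt]
        calc ∫ y in Set.Ici t, f1 y = ∫ y in Set.Ici t, f y :=
              setIntegral_congr_ae measurableSet_Ici hfs
          _ = ∫ y in Set.Ici t, (Set.Ioo a b).indicator f y := by rw [hf_ind]
          _ = ∫ y in Set.Ici t ∩ Set.Ioo a b, f y := setIntegral_indicator hIoo
          _ = ∫ y in Set.Ico t b, f y := by rw [hIset]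
          _ = ∫ y in Set.Ioo t b, f y := (setIntegral_congr_set Ioo_ae_eq_Ico).symm
      have hYt2 : Yt = ∫ y in Set.Ioo t b, y * f y := by
        have hYind : (Set.Ioo a b).indicator (fun y => y * f y) = fun y => y * f y := by
          funext y
          by_cases hy : y ∈ Set.Ioo a b
          · rw [Set.indicator_of_mem hy]
          · rw [Set.indicator_of_notMem hy, hf_zero y hy, mul_zero]
        have hfs2 : ∀ᵐ y, y ∈ Set.Ici t → y * f1 y = y * f y := by
          filter_upwards [hff1] with y hy
          intro _
          rw [hy]
        rw [hYt]
        calc ∫ y in Set.Ici t, y * f1 y = ∫ y in Set.Ici t, y * f y :=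
              setIntegral_congr_ae measurableSet_Ici hfs2
          _ = ∫ y in Set.Ici t, (Set.Ioo a b).indicator (fun y => y * f y) y := by rw [hYind]
          _ = ∫ y in Set.Ici t ∩ Set.Ioo a b, y * f y := setIntegral_indicator hIoo
          _ = ∫ y in Set.Ico t b, y * f y := by rw [hIset]
          _ = ∫ y in Set.Ioo t b, y * f y := (setIntegral_congr_set Ioo_ae_eq_Ico).symm
      have hHf : hFun a b f t * f t = Yt - densityMean a b f * Bt := by
        have e0 : hFun a b f t
            = (∫ y in Set.Ioo t b, (y - densityMean a b f) * f y) / f t := rfl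
        rw [e0, div_mul_cancel₀ _ (hf_pos t ht).ne']
        have e1 : (fun y => (y - densityMean a b f) * f y)
            = fun y => y * f y - densityMean a b f * f y := funext fun y => by ring
        rw [e1, integral_sub hxfi.integrableOn (hf_int.const_mul _).integrableOn,
          integral_const_mul, ← hYt2, ← hBt2]
      have hineq : Ft * Yt - Xt * Bt = hFun a b f t * f t := by
        rw [hHf]
        linear_combination Yt * hsplit1 - Bt * hsplit2
      have hle : hFun a b f t * f t ≤ K * f t := by
        have h5 := hKb t ht
        have hf' := (hf_pos t ht).le
        calc hFun a b f t * f t ≤ |hFun a b f t| * f t :=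
              mul_le_mul_of_nonneg_right (le_abs_self _) hf'
          _ ≤ K * f t := mul_le_mul_of_nonneg_right h5 hf'
      calc 2 * (Ft * Yt - Xt * Bt) = 2 * (hFun a b f t * f t) := by rw [hineq]
        _ ≤ 2 * (K * f t) := by linarith
        _ = 2 * (K * f1 t) := by rw [hft]
    · have hz : G2 t = 0 := Set.indicator_of_notMem ht _
      rw [hz, ENNReal.ofReal_zero, zero_mul, zero_mul]
  -- final integrability and computation
  have hKf1nn : ∀ t : ℝ, 0 ≤ 2 * (K * f1 t) := fun t =>
    mul_nonneg (by norm_num) (mul_nonneg hKnn (hf1n t))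
  have int_KG2 : Integrable (fun t => G2 t * (2 * (K * f1 t))) := by
    refine Integrable.mono' (hf1_int.const_mul (CG * (2 * K)))
      ((hG2m.mul (measurable_const.mul (measurable_const.mul hf1m))).aestronglyMeasurable)
      (Filter.Eventually.of_forall fun t => ?_)
    rw [Real.norm_eq_abs, abs_of_nonneg (mul_nonneg (hG2n t) (hKf1nn t))]
    calc G2 t * (2 * (K * f1 t)) ≤ CG * (2 * (K * f1 t)) :=
          mul_le_mul_of_nonneg_right (hG2b t) (hKf1nn t)
      _ = CG * (2 * K) * f1 t := by ring
  have hlint_final : ∫⁻ t, ENNReal.ofReal (G2 t) * ENNReal.ofReal (2 * (K * f1 t))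
      = ENNReal.ofReal (∫ t, G2 t * (2 * (K * f1 t))) := by
    rw [ofReal_integral_eq_lintegral_ofReal int_KG2
      (Filter.Eventually.of_forall fun t => mul_nonneg (hG2n t) (hKf1nn t))]
    exact lintegral_congr fun t => (ENNReal.ofReal_mul (hG2n t)).symm
  have hT'le : T' ≤ ∫ t, G2 t * (2 * (K * f1 t)) := by
    have h1 : ENNReal.ofReal T' ≤ ENNReal.ofReal (∫ t, G2 t * (2 * (K * f1 t))) := by
      rw [hconv2, tonelli_core f1 G2 hf1m hf1n hf1_int hxf1i hG2m, ← hlint_final]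
      exact lintegral_mono_ae hbeta_le
    exact (ENNReal.ofReal_le_ofReal_iff
      (integral_nonneg fun t => mul_nonneg (hG2n t) (hKf1nn t))).mp h1
  have hRHS : ∫ x, (g' x) ^ 2 ∂ν = ∫ t, f1 t * G2 t := by
    rw [conv]
    refine integral_congr_ae ?_
    filter_upwards [hff1] with x hfx
    by_cases hx : x ∈ Set.Ioo a b
    · have hG2x : G2 x = g' x ^ 2 := by
        rw [hG2def]
        rw [Set.indicator_of_mem hx, hderiv_eq x hx]
      rw [hG2x, hfx]
    · rw [hf_zero x hx, hf1z x hx, zero_mul, zero_mul]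
  have hfinal_eq : ∫ t, G2 t * (2 * (K * f1 t)) = 2 * K * ∫ t, f1 t * G2 t := by
    have e : (fun t => G2 t * (2 * (K * f1 t))) = fun t => (2 * K) * (f1 t * G2 t) :=
      funext fun t => by ring
    rw [e, integral_const_mul]
  have hvar2 : variance g ν = T / 2 := by rw [hvar]; linarith
  rw [hRHS]
  calc variance g ν = T / 2 := hvar2
    _ ≤ T' / 2 := by linarith
    _ ≤ K * ∫ t, f1 t * G2 t := by
        have h6 := hT'le
        rw [hfinal_eq] at h6
        linarith


end
end

section
/- In the directed polymer model with environment law ν supported on the bounded interval (a,b), for any β ≥ 0 and any 1 ≤ k ≤ n, one has almost surely α_k' ≤ e^{4(b−a)β} α_k, where α_k' = E(α_k | F_k). -/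
open MeasureTheory ProbabilityTheory Set

noncomputable section

/-- The energy `∑_{k=1}^n ω_{k, x_k}` of a path `p` in the environment `env`
(here `env k x` is `ω_{k+1, x}`, i.e. steps are indexed by `Fin n`). -/
def energy {d n : ℕ} (env : Fin n → (Fin d → ℤ) → ℝ) (p : PolymerPath d n) : ℝ :=
  ∑ k : Fin n, env k (p.vertex k)

/-- The Gibbs weight `exp(β ∑_k ω_{k,x_k})` of a path. -/
def pathWeight {d n : ℕ} (β : ℝ) (env : Fin n → (Fin d → ℤ) → ℝ) (p : PolymerPath d n) : ℝ :=
  Real.exp (β * energy env p)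

/-- The partition function `Z = ∑_{p ∈ 𝒫_n} exp(β ∑_k ω_{k,x_k})`. -/
def partitionZ (d n : ℕ) (β : ℝ) (env : Fin n → (Fin d → ℤ) → ℝ) : ℝ :=
  ∑' p : PolymerPath d n, pathWeight β env p

/-- The Gibbs (polymer) measure of a single path. -/
def gibbsProb {d n : ℕ} (β : ℝ) (env : Fin n → (Fin d → ℤ) → ℝ) (p : PolymerPath d n) : ℝ :=
  pathWeight β env p / partitionZ d n β env

/-- `θ_{k,x}`: the Gibbs probability that the path visits `x` at step `k`
(`k : Fin n` represents step `k+1`). -/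
def theta {d n : ℕ} (β : ℝ) (env : Fin n → (Fin d → ℤ) → ℝ) (k : Fin n) (x : Fin d → ℤ) : ℝ :=
  ∑' p : PolymerPath d n, if p.vertex k = x then gibbsProb β env p else 0

/-- `α_k = ∑_{x ∈ ℤ^d} θ_{k,x}²`. -/
def alphaOf {d n : ℕ} (β : ℝ) (env : Fin n → (Fin d → ℤ) → ℝ) (k : Fin n) : ℝ :=
  ∑' x : Fin d → ℤ, (theta β env k x) ^ 2

/-- The (deterministic-level) environment obtained from the family of random variables `W`
at the sample point `ω`: `env k x = ω_{k,x} = W (k,x) ω`. -/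
def envOf {d n : ℕ} {Ω : Type*} (W : Fin n × (Fin d → ℤ) → Ω → ℝ) (ω : Ω) :
    Fin n → (Fin d → ℤ) → ℝ :=
  fun k x => W (k, x) ω

/-- The σ-algebra `F_k` generated by the random variables `{ω_{j,y} : j ≠ k, y ∈ ℤ^d}`. -/
def sigmaAway {d n : ℕ} {Ω : Type*} [MeasurableSpace Ω]
    (W : Fin n × (Fin d → ℤ) → Ω → ℝ) (k : Fin n) : MeasurableSpace Ω :=
  ⨆ i : {i : Fin n × (Fin d → ℤ) // i.1 ≠ k}, MeasurableSpace.comap (W i.val) inferInstance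

/-- The random variable `α_k = ∑_x θ_{k,x}²`, as a function of the sample point. -/
def alphaRV {d n : ℕ} {Ω : Type*} (β : ℝ) (W : Fin n × (Fin d → ℤ) → Ω → ℝ) (k : Fin n)
    (ω : Ω) : ℝ :=
  alphaOf β (envOf W ω) k

section Aux

variable {d n : ℕ}

lemma PolymerPath.abs_toFun_le (p : PolymerPath d n) (m : Fin (n + 1)) (i : Fin d) :
    |p.toFun m i| ≤ (m : ℤ) := by
  induction m using Fin.induction with
  | zero => simp [p.start_eq]
  | succ j ih =>
    have hstep : |p.toFun j.succ i - p.toFun j.castSucc i| ≤ 1 := by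
      rw [← p.adj j]
      exact Finset.single_le_sum (f := fun l => |p.toFun j.succ l - p.toFun j.castSucc l|)
        (fun l _ => abs_nonneg _) (Finset.mem_univ i)
    have h1 : |p.toFun j.succ i| ≤ |p.toFun j.castSucc i| + 1 := by
      calc |p.toFun j.succ i|
          = |p.toFun j.castSucc i + (p.toFun j.succ i - p.toFun j.castSucc i)| := by ring_nf
        _ ≤ |p.toFun j.castSucc i| + |p.toFun j.succ i - p.toFun j.castSucc i| := abs_add_le _ _
        _ ≤ |p.toFun j.castSucc i| + 1 := by linarith
    have h2 : ((j.castSucc : Fin (n+1)) : ℤ) = (j : ℤ) := by simp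
    have h3 : ((j.succ : Fin (n+1)) : ℤ) = (j : ℤ) + 1 := by
      simp [Fin.val_succ]
    rw [h2] at ih
    rw [h3]
    linarith

instance PolymerPath.instFinite : Finite (PolymerPath d n) := by
  let F : PolymerPath d n → (Fin (n+1) → Fin d → Fin (2*n+1)) := fun p m i =>
    ⟨(p.toFun m i + n).toNat, by
      have h := abs_le.mp (p.abs_toFun_le m i)
      have hm : (m : ℤ) ≤ n := by exact_mod_cast Fin.is_le m
      omega⟩
  have hF : Function.Injective F := by
    intro p q h
    have htf : p.toFun = q.toFun := by
      funext m i
      have h1 : (p.toFun m i + n).toNat = (q.toFun m i + n).toNat := by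
        have := congrArg Fin.val (congrFun (congrFun h m) i)
        exact this
      have hp := abs_le.mp (p.abs_toFun_le m i)
      have hq := abs_le.mp (q.abs_toFun_le m i)
      have hm : (m : ℤ) ≤ n := by exact_mod_cast Fin.is_le m
      omega
    cases p; cases q; cases htf; rfl
  exact Finite.of_injective F hF

lemma polymerPath_nonempty (hd : 1 ≤ d) : Nonempty (PolymerPath d n) := by
  classical
  refine ⟨⟨fun m i => if i = ⟨0, hd⟩ then (m.val % 2 : ℤ) else 0, ?_, ?_⟩⟩
  · funext i
    by_cases h : i = ⟨0, hd⟩ <;> simp [h]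
  · intro j
    rw [Finset.sum_eq_single (⟨0, hd⟩ : Fin d)]
    · simp only [if_pos rfl, Fin.val_succ, Fin.coe_castSucc]
      push_cast
      rcases Int.emod_two_eq_zero_or_one ((j.val : ℤ)) with h | h
      · rw [show ((j.val : ℤ) + 1) % 2 = 1 by omega, h]; norm_num
      · rw [show ((j.val : ℤ) + 1) % 2 = 0 by omega, h]; norm_num
    · intro i _ hi
      simp [hi]
    · simp

end Aux

section Aux2

variable {d n : ℕ}

lemma partitionZ_pos (hne : Nonempty (PolymerPath d n)) (β : ℝ)
    (env : Fin n → (Fin d → ℤ) → ℝ) : 0 < partitionZ d n β env := by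
  classical
  haveI := Fintype.ofFinite (PolymerPath d n)
  rw [partitionZ, tsum_fintype]
  exact Finset.sum_pos (fun p _ => Real.exp_pos _) Finset.univ_nonempty

lemma gibbsProb_nonneg (β : ℝ) (env : Fin n → (Fin d → ℤ) → ℝ) (p : PolymerPath d n) :
    0 ≤ gibbsProb β env p :=
  div_nonneg (Real.exp_pos _).le (tsum_nonneg fun _ => (Real.exp_pos _).le)

lemma theta_nonneg (β : ℝ) (env : Fin n → (Fin d → ℤ) → ℝ) (k : Fin n) (x : Fin d → ℤ) :
    0 ≤ theta β env k x := by
  refine tsum_nonneg fun p => ?_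
  split_ifs
  · exact gibbsProb_nonneg β env p
  · exact le_rfl

lemma theta_eq_zero (β : ℝ) (env : Fin n → (Fin d → ℤ) → ℝ) (k : Fin n) {x : Fin d → ℤ}
    (hx : ∀ p : PolymerPath d n, p.vertex k ≠ x) : theta β env k x = 0 :=
  (tsum_congr fun p => if_neg (hx p)).trans tsum_zero

lemma alpha_eq_sum [Fintype (PolymerPath d n)] [DecidableEq (Fin d → ℤ)]
    (β : ℝ) (env : Fin n → (Fin d → ℤ) → ℝ) (k : Fin n) :
    alphaOf β env k =
      ∑ x ∈ (Finset.univ.image fun p : PolymerPath d n => p.vertex k),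
        (theta β env k x) ^ 2 := by
  refine tsum_eq_sum ?_
  intro x hx
  have hvx : ∀ p : PolymerPath d n, p.vertex k ≠ x := fun p hp =>
    hx (Finset.mem_image.mpr ⟨p, Finset.mem_univ p, hp⟩)
  rw [theta_eq_zero β env k hvx]
  norm_num

lemma alphaOf_nonneg (β : ℝ) (env : Fin n → (Fin d → ℤ) → ℝ) (k : Fin n) :
    0 ≤ alphaOf β env k :=
  tsum_nonneg fun _ => sq_nonneg _

lemma alphaOf_le_one (hne : Nonempty (PolymerPath d n)) (β : ℝ)
    (env : Fin n → (Fin d → ℤ) → ℝ) (k : Fin n) : alphaOf β env k ≤ 1 := by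
  classical
  haveI := Fintype.ofFinite (PolymerPath d n)
  have hZ := partitionZ_pos hne β env
  rw [alpha_eq_sum β env k]
  have hθsum : ∑ x ∈ (Finset.univ.image fun p : PolymerPath d n => p.vertex k),
      theta β env k x = 1 := by
    simp only [theta, tsum_fintype]
    rw [Finset.sum_comm]
    have hinner : ∀ p : PolymerPath d n,
        (∑ x ∈ (Finset.univ.image fun p : PolymerPath d n => p.vertex k),
          if p.vertex k = x then gibbsProb β env p else 0) = gibbsProb β env p := by
      intro p
      rw [Finset.sum_ite_eq]
      exact if_pos (Finset.mem_image.mpr ⟨p, Finset.mem_univ p, rfl⟩)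
    rw [Finset.sum_congr rfl fun p _ => hinner p]
    rw [show gibbsProb β env = fun p => pathWeight β env p / partitionZ d n β env from rfl]
    rw [← Finset.sum_div]
    rw [show (∑ p : PolymerPath d n, pathWeight β env p) = partitionZ d n β env from
      (tsum_fintype _).symm]
    exact div_self hZ.ne'
  calc ∑ x ∈ (Finset.univ.image fun p : PolymerPath d n => p.vertex k), (theta β env k x) ^ 2
      ≤ (∑ x ∈ (Finset.univ.image fun p : PolymerPath d n => p.vertex k), theta β env k x) ^ 2 :=
        Finset.sum_sq_le_sq_sum_of_nonneg fun x _ => theta_nonneg β env k x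
    _ = 1 := by rw [hθsum]; norm_num

lemma theta_pair_bound (hne : Nonempty (PolymerPath d n)) {β Δ : ℝ} (hβ : 0 ≤ β) (hΔ : 0 ≤ Δ)
    {e e' : Fin n → (Fin d → ℤ) → ℝ} {k : Fin n}
    (hoff : ∀ j, j ≠ k → ∀ x, e j x = e' j x)
    (h1 : ∀ x, e k x ≤ e' k x) (h2 : ∀ x, e' k x ≤ e k x + Δ) (x : Fin d → ℤ) :
    theta β e' k x ≤ Real.exp (β * Δ) * theta β e k x ∧
    theta β e k x ≤ Real.exp (β * Δ) * theta β e' k x := by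
  classical
  haveI := Fintype.ofFinite (PolymerPath d n)
  have hE : ∀ p : PolymerPath d n,
      energy e' p - energy e p = e' k (p.vertex k) - e k (p.vertex k) := by
    intro p
    rw [energy, energy, ← Finset.sum_sub_distrib, Finset.sum_eq_single k]
    · intro j _ hj
      rw [hoff j hj]
      ring
    · simp
  have hEle : ∀ p : PolymerPath d n, energy e p ≤ energy e' p := by
    intro p
    have := hE p
    have := h1 (p.vertex k)
    linarith
  have hEle2 : ∀ p : PolymerPath d n, energy e' p ≤ energy e p + Δ := by
    intro p
    have := hE p
    have := h2 (p.vertex k)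
    linarith
  have hw1 : ∀ p : PolymerPath d n, pathWeight β e p ≤ pathWeight β e' p := fun p =>
    Real.exp_le_exp.mpr (mul_le_mul_of_nonneg_left (hEle p) hβ)
  have hw2 : ∀ p : PolymerPath d n,
      pathWeight β e' p ≤ Real.exp (β * Δ) * pathWeight β e p := by
    intro p
    rw [pathWeight, pathWeight, ← Real.exp_add]
    refine Real.exp_le_exp.mpr ?_
    have := mul_le_mul_of_nonneg_left (hEle2 p) hβ
    nlinarith
  have hZe := partitionZ_pos hne β e
  have hZe' := partitionZ_pos hne β e'
  have hZle : partitionZ d n β e ≤ partitionZ d n β e' := by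
    rw [partitionZ, partitionZ, tsum_fintype, tsum_fintype]
    exact Finset.sum_le_sum fun p _ => hw1 p
  have hZle2 : partitionZ d n β e' ≤ Real.exp (β * Δ) * partitionZ d n β e := by
    rw [partitionZ, partitionZ, tsum_fintype, tsum_fintype, Finset.mul_sum]
    exact Finset.sum_le_sum fun p _ => hw2 p
  have hg1 : ∀ p : PolymerPath d n,
      gibbsProb β e' p ≤ Real.exp (β * Δ) * gibbsProb β e p := by
    intro p
    rw [gibbsProb, gibbsProb, mul_div_assoc']
    exact div_le_div₀ (mul_nonneg (Real.exp_pos _).le (Real.exp_pos _).le) (hw2 p) hZe hZle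
  have hg2 : ∀ p : PolymerPath d n,
      gibbsProb β e p ≤ Real.exp (β * Δ) * gibbsProb β e' p := by
    intro p
    rw [gibbsProb, gibbsProb, mul_div_assoc']
    rw [div_le_div_iff₀ hZe hZe']
    have hwp := hw1 p
    have hwnn : (0:ℝ) ≤ pathWeight β e p := (Real.exp_pos _).le
    have hwnn' : (0:ℝ) ≤ pathWeight β e' p := (Real.exp_pos _).le
    nlinarith [hZle2, hZe'.le]
  constructor
  · rw [theta, theta, tsum_fintype, tsum_fintype, Finset.mul_sum]
    refine Finset.sum_le_sum fun p _ => ?_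
    split_ifs
    · exact hg1 p
    · simp
  · rw [theta, theta, tsum_fintype, tsum_fintype, Finset.mul_sum]
    refine Finset.sum_le_sum fun p _ => ?_
    split_ifs
    · exact hg2 p
    · simp

lemma alpha_pair_bound (hne : Nonempty (PolymerPath d n)) {β Δ : ℝ} (hβ : 0 ≤ β) (hΔ : 0 ≤ Δ)
    {e e' : Fin n → (Fin d → ℤ) → ℝ} {k : Fin n}
    (hoff : ∀ j, j ≠ k → ∀ x, e j x = e' j x)
    (h1 : ∀ x, e k x ≤ e' k x) (h2 : ∀ x, e' k x ≤ e k x + Δ) :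
    alphaOf β e' k ≤ Real.exp (2 * (β * Δ)) * alphaOf β e k ∧
    alphaOf β e k ≤ Real.exp (2 * (β * Δ)) * alphaOf β e' k := by
  classical
  haveI := Fintype.ofFinite (PolymerPath d n)
  have hCsq : Real.exp (2 * (β * Δ)) = (Real.exp (β * Δ)) ^ 2 := by
    rw [sq, ← Real.exp_add]
    congr 1
    ring
  constructor
  · rw [alpha_eq_sum β e' k, alpha_eq_sum β e k, Finset.mul_sum]
    refine Finset.sum_le_sum fun x _ => ?_
    have hb := (theta_pair_bound hne hβ hΔ hoff h1 h2 x).1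
    calc (theta β e' k x) ^ 2 ≤ (Real.exp (β * Δ) * theta β e k x) ^ 2 :=
          pow_le_pow_left₀ (theta_nonneg β e' k x) hb 2
      _ = Real.exp (2 * (β * Δ)) * (theta β e k x) ^ 2 := by rw [hCsq]; ring
  · rw [alpha_eq_sum β e' k, alpha_eq_sum β e k, Finset.mul_sum]
    refine Finset.sum_le_sum fun x _ => ?_
    have hb := (theta_pair_bound hne hβ hΔ hoff h1 h2 x).2
    calc (theta β e k x) ^ 2 ≤ (Real.exp (β * Δ) * theta β e' k x) ^ 2 :=
          pow_le_pow_left₀ (theta_nonneg β e k x) hb 2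
      _ = Real.exp (2 * (β * Δ)) * (theta β e' k x) ^ 2 := by rw [hCsq]; ring

lemma measurable_alpha {Ω : Type*} [MeasurableSpace Ω] (β : ℝ) (k : Fin n)
    (E : Ω → Fin n → (Fin d → ℤ) → ℝ) (hE : ∀ j x, Measurable fun ω => E ω j x) :
    Measurable fun ω => alphaOf β (E ω) k := by
  classical
  haveI := Fintype.ofFinite (PolymerPath d n)
  have hw : ∀ p : PolymerPath d n, Measurable fun ω => pathWeight β (E ω) p := by
    intro p
    simp only [pathWeight, energy]
    exact Real.measurable_exp.comp
      (measurable_const.mul (Finset.measurable_sum _ fun j _ => hE j _))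
  have hZ : Measurable fun ω => partitionZ d n β (E ω) := by
    simp only [partitionZ, tsum_fintype]
    exact Finset.measurable_sum _ fun p _ => hw p
  have hg : ∀ p : PolymerPath d n, Measurable fun ω => gibbsProb β (E ω) p := fun p =>
    (hw p).div hZ
  have hθ : ∀ x, Measurable fun ω => theta β (E ω) k x := by
    intro x
    simp only [theta, tsum_fintype]
    refine Finset.measurable_sum _ fun p _ => ?_
    by_cases h : p.vertex k = x
    · simpa [h] using hg p
    · simp [h]
  have hrw : (fun ω => alphaOf β (E ω) k) = fun ω =>
      ∑ x ∈ (Finset.univ.image fun p : PolymerPath d n => p.vertex k),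
        (theta β (E ω) k x) ^ 2 := by
    funext ω
    exact alpha_eq_sum β (E ω) k
  rw [hrw]
  exact Finset.measurable_sum _ fun x _ => (hθ x).pow_const 2

end Aux2

/-- Lemma 2.5: in the directed polymer model with environment law `ν`
supported on the bounded interval `(a,b)`, for any `β ≥ 0` and `1 ≤ k ≤ n`, almost surely
`α_k' ≤ e^{4(b−a)β} α_k`, where `α_k' = E(α_k | F_k)`. -/
theorem condexp_alpha_le (d n : ℕ) (hd : 1 ≤ d) (hn : 1 ≤ n)
    (a b : ℝ) (hab : a < b) (ν : Measure ℝ) [IsProbabilityMeasure ν]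
    (hν_supp : ν (Set.Ioo a b)ᶜ = 0)
    (β : ℝ) (hβ : 0 ≤ β)
    (Ω : Type) [MeasurableSpace Ω] (P : Measure Ω) [IsProbabilityMeasure P]
    (W : Fin n × (Fin d → ℤ) → Ω → ℝ)
    (hW_meas : ∀ i, Measurable (W i))
    (hW_indep : iIndepFun W P)
    (hW_law : ∀ i, P.map (W i) = ν)
    (k : Fin n) :
    ∀ᵐ ω ∂P, (P[alphaRV β W k|sigmaAway W k]) ω
      ≤ Real.exp (4 * (b - a) * β) * alphaRV β W k ω := by
  classical
  haveI hne : Nonempty (PolymerPath d n) := polymerPath_nonempty hd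
  have hm : sigmaAway W k ≤ (by infer_instance : MeasurableSpace Ω) := by
    refine iSup_le fun i => ?_
    exact measurable_iff_comap_le.mp (hW_meas i.val)
  set C : ℝ := Real.exp (2 * (β * (b - a))) with hC_def
  have hC0 : (0:ℝ) ≤ C := (Real.exp_pos _).le
  set E' : Ω → Fin n → (Fin d → ℤ) → ℝ :=
    fun ω j x => if j = k then a else W (j, x) ω with hE'_def
  set g : Ω → ℝ := fun ω => alphaOf β (E' ω) k with hg_def
  set f : Ω → ℝ := alphaRV β W k with hf_def
  -- measurability
  have hf_meas : Measurable f :=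
    measurable_alpha β k (fun ω => envOf W ω) (fun j x => hW_meas (j, x))
  have hg_meas : Measurable[sigmaAway W k] g := by
    refine @measurable_alpha d n Ω (sigmaAway W k) β k E' ?_
    intro j x
    by_cases hj : j = k
    · simp only [hE'_def, if_pos hj]
      exact @measurable_const ℝ Ω _ (sigmaAway W k) a
    · simp only [hE'_def, if_neg hj]
      have hle : MeasurableSpace.comap (W (j, x)) inferInstance ≤ sigmaAway W k :=
        le_iSup (fun i : {i : Fin n × (Fin d → ℤ) // i.1 ≠ k} =>
          MeasurableSpace.comap (W i.val) inferInstance) ⟨(j, x), hj⟩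
      exact measurable_iff_comap_le.mpr hle
  -- integrability
  have hf_bdd : ∀ ω, ‖f ω‖ ≤ 1 := by
    intro ω
    show ‖alphaOf β (envOf W ω) k‖ ≤ 1
    rw [Real.norm_eq_abs, abs_of_nonneg (alphaOf_nonneg β _ k)]
    exact alphaOf_le_one hne β _ k
  have hg_bdd : ∀ ω, ‖g ω‖ ≤ 1 := by
    intro ω
    show ‖alphaOf β (E' ω) k‖ ≤ 1
    rw [Real.norm_eq_abs, abs_of_nonneg (alphaOf_nonneg β _ k)]
    exact alphaOf_le_one hne β _ k
  have hf_int : Integrable f P :=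
    ⟨hf_meas.aestronglyMeasurable, HasFiniteIntegral.of_bounded (C := 1) (ae_of_all _ hf_bdd)⟩
  have hg_int : Integrable g P :=
    ⟨(hg_meas.mono hm le_rfl).aestronglyMeasurable,
      HasFiniteIntegral.of_bounded (C := 1) (ae_of_all _ hg_bdd)⟩
  -- a.e. environment in (a,b)
  have hae : ∀ᵐ ω ∂P, ∀ i, W i ω ∈ Set.Ioo a b := by
    rw [ae_all_iff]
    intro i
    have h0 : P ((W i) ⁻¹' (Set.Ioo a b)ᶜ) = 0 := by
      rw [← Measure.map_apply (hW_meas i) measurableSet_Ioo.compl, hW_law i]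
      exact hν_supp
    rw [ae_iff]
    exact h0
  -- key pointwise bounds
  have hkey : ∀ᵐ ω ∂P, f ω ≤ C * g ω ∧ g ω ≤ C * f ω := by
    filter_upwards [hae] with ω hω
    have hoff : ∀ j, j ≠ k → ∀ x, E' ω j x = envOf W ω j x := by
      intro j hj x
      simp only [hE'_def, if_neg hj, envOf]
    have h1 : ∀ x, E' ω k x ≤ envOf W ω k x := by
      intro x
      simp only [hE'_def, if_pos rfl, envOf]
      exact (hω (k, x)).1.le
    have h2 : ∀ x, envOf W ω k x ≤ E' ω k x + (b - a) := by
      intro x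
      simp only [hE'_def, if_pos rfl, envOf]
      have := (hω (k, x)).2
      linarith
    have hΔ : (0:ℝ) ≤ b - a := by linarith
    have hpair := alpha_pair_bound hne hβ hΔ hoff h1 h2
    exact ⟨hpair.1, hpair.2⟩
  -- conditional expectation
  haveI : SigmaFinite (P.trim hm) := inferInstance
  have hfCg : f ≤ᵐ[P] C • g := by
    filter_upwards [hkey] with ω hω
    simpa [smul_eq_mul] using hω.1
  have hmono : P[f|sigmaAway W k] ≤ᵐ[P] P[C • g|sigmaAway W k] :=
    condExp_mono hf_int (hg_int.smul C) hfCg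
  have hsmul : P[C • g|sigmaAway W k] =ᵐ[P] C • P[g|sigmaAway W k] := condExp_smul C g (sigmaAway W k)
  have hgm : P[g|sigmaAway W k] = g :=
    condExp_of_stronglyMeasurable hm (hg_meas.stronglyMeasurable) hg_int
  have hexp : C * C = Real.exp (4 * (b - a) * β) := by
    rw [hC_def, ← Real.exp_add]
    congr 1
    ring
  filter_upwards [hmono, hsmul, hkey] with ω h1' h2' h3'
  calc (P[f|sigmaAway W k]) ω ≤ (P[C • g|sigmaAway W k]) ω := h1'
    _ = C * (P[g|sigmaAway W k]) ω := by rw [h2']; simp [smul_eq_mul]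
    _ = C * g ω := by rw [hgm]
    _ ≤ C * (C * f ω) := mul_le_mul_of_nonneg_left h3'.2 hC0
    _ = Real.exp (4 * (b - a) * β) * f ω := by rw [← mul_assoc, hexp]

end
end

section
/- Fix n ≥ 1, β ≥ 1 and 1 ≤ k ≤ n, and a deterministic environment ω with ω_{k,y} ∈ (a,b) for all y. Viewing γ_k = ∑_x h(ω_{k,x}) θ_{k,x} as a function of the step-k environment values (ω_{k,x})_{x∈Z^d}, there is a constant C depending only on sup_{a<x<b}|h| and sup_{a<x<b}|h'| such that ∑_{x∈Z^d} (∂γ_k/∂ω_{k,x})² ≤ C β² α_k, where in fact ∂γ_k/∂ω_{k,x} = h'(ω_{k,x}) θ_{k,x} + β h(ω_{k,x}) θ_{k,x} − β θ_{k,x} ∑_y h(ω_{k,y}) θ_{k,y}. -/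
open MeasureTheory ProbabilityTheory Set

noncomputable section

/-- The environment obtained from `env` by replacing the value `ω_{k,x}` by `t`. -/
def envUpd {d n : ℕ} (env : Fin n → (Fin d → ℤ) → ℝ) (k : Fin n) (x : Fin d → ℤ) (t : ℝ) :
    Fin n → (Fin d → ℤ) → ℝ :=
  fun j y => if j = k ∧ y = x then t else env j y

/-- `γ_k = ∑_x h(ω_{k,x}) θ_{k,x}`. -/
def gammaOf {d n : ℕ} (h : ℝ → ℝ) (β : ℝ) (env : Fin n → (Fin d → ℤ) → ℝ) (k : Fin n) : ℝ :=
  ∑' x : Fin d → ℤ, h (env k x) * theta β env k x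

namespace PPAux

variable {d n : ℕ}

lemma abs_sum_le (p : PolymerPath d n) :
    ∀ m, (hm : m ≤ n) → (∑ i, |p.toFun ⟨m, Nat.lt_succ_of_le hm⟩ i|) ≤ (m : ℤ) := by
  intro m
  induction m with
  | zero => intro _; simp [p.start_eq]
  | succ m ih =>
    intro hm
    have hm' : m ≤ n := by omega
    have hadj := p.adj ⟨m, hm⟩
    have h1 : (⟨m, hm⟩ : Fin n).succ = ⟨m + 1, Nat.lt_succ_of_le hm⟩ := rfl
    have h2 : (⟨m, hm⟩ : Fin n).castSucc = ⟨m, Nat.lt_succ_of_le hm'⟩ := rfl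
    rw [h1, h2] at hadj
    calc (∑ i, |p.toFun ⟨m + 1, Nat.lt_succ_of_le hm⟩ i|)
        ≤ ∑ i, (|p.toFun ⟨m + 1, Nat.lt_succ_of_le hm⟩ i - p.toFun ⟨m, Nat.lt_succ_of_le hm'⟩ i|
            + |p.toFun ⟨m, Nat.lt_succ_of_le hm'⟩ i|) := by
          refine Finset.sum_le_sum fun i _ => ?_
          have := abs_sub_abs_le_abs_sub (p.toFun ⟨m + 1, Nat.lt_succ_of_le hm⟩ i)
            (p.toFun ⟨m, Nat.lt_succ_of_le hm'⟩ i)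
          have := abs_add_le (p.toFun ⟨m + 1, Nat.lt_succ_of_le hm⟩ i
            - p.toFun ⟨m, Nat.lt_succ_of_le hm'⟩ i) (p.toFun ⟨m, Nat.lt_succ_of_le hm'⟩ i)
          simpa using this
      _ = 1 + ∑ i, |p.toFun ⟨m, Nat.lt_succ_of_le hm'⟩ i| := by
          rw [Finset.sum_add_distrib, hadj]
      _ ≤ (↑(m + 1) : ℤ) := by
          have := ih hm'
          push_cast
          omega

lemma abs_toFun_le (p : PolymerPath d n) (j : Fin (n + 1)) (i : Fin d) :
    |p.toFun j i| ≤ (n : ℤ) := by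
  have h1 := abs_sum_le p j.val (Nat.lt_succ_iff.mp j.isLt)
  have h2 : (⟨j.val, Nat.lt_succ_of_le (Nat.lt_succ_iff.mp j.isLt)⟩ : Fin (n + 1)) = j := rfl
  rw [h2] at h1
  have h3 : |p.toFun j i| ≤ ∑ i', |p.toFun j i'| :=
    Finset.single_le_sum (f := fun i' => |p.toFun j i'|) (fun _ _ => abs_nonneg _)
      (Finset.mem_univ i)
  have h4 : (j.val : ℤ) ≤ (n : ℤ) := by exact_mod_cast Nat.lt_succ_iff.mp j.isLt
  omega

lemma pp_finite (d n : ℕ) : Finite (PolymerPath d n) := by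
  classical
  let f : PolymerPath d n → (Fin (n + 1) → Fin d → Finset.Icc (-(n : ℤ)) (n : ℤ)) :=
    fun p j i => ⟨p.toFun j i, by
      have h := abs_le.mp (abs_toFun_le p j i)
      simp only [Finset.mem_Icc]
      exact h⟩
  have hf : Function.Injective f := by
    intro p q hpq
    cases p; cases q
    simp only [PolymerPath.mk.injEq]
    funext j i
    have := congrFun (congrFun hpq j) i
    exact Subtype.ext_iff.mp this
  exact Finite.of_injective f hf

lemma pp_nonempty (hd : 1 ≤ d) : Nonempty (PolymerPath d n) := by
  refine ⟨⟨fun m i => if i = (⟨0, hd⟩ : Fin d) then ((m.val % 2 : ℕ) : ℤ) else 0, ?_, ?_⟩⟩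
  · funext i; simp
  · intro k
    rw [Finset.sum_eq_single (⟨0, hd⟩ : Fin d)]
    · have h1 : k.succ.val = k.val + 1 := rfl
      have h2 : (k.castSucc).val = k.val := rfl
      simp only [if_pos rfl, h1, h2]
      rcases Nat.mod_two_eq_zero_or_one k.val with hp | hp <;>
        simp [Nat.add_mod, hp]
    · intro i _ hi; simp [hi]
    · simp

end PPAux

namespace PPAux

variable {d n : ℕ}

lemma partitionZ_eq [Fintype (PolymerPath d n)] (β : ℝ) (env : Fin n → (Fin d → ℤ) → ℝ) :
    partitionZ d n β env = ∑ p : PolymerPath d n, pathWeight β env p :=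
  tsum_fintype _

lemma theta_eq [Fintype (PolymerPath d n)] (β : ℝ) (env : Fin n → (Fin d → ℤ) → ℝ)
    (k : Fin n) (x : Fin d → ℤ) :
    theta β env k x =
      (∑ p : PolymerPath d n, if p.vertex k = x then pathWeight β env p else 0)
        / partitionZ d n β env := by
  rw [theta, tsum_fintype, Finset.sum_div]
  refine Finset.sum_congr rfl fun p _ => ?_
  by_cases hp : p.vertex k = x <;> simp [hp, gibbsProb]

lemma gamma_eq [Fintype (PolymerPath d n)] (h : ℝ → ℝ) (β : ℝ)
    (env : Fin n → (Fin d → ℤ) → ℝ) (k : Fin n) :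
    gammaOf h β env k =
      (∑ p : PolymerPath d n, h (env k (p.vertex k)) * pathWeight β env p)
        / partitionZ d n β env := by
  classical
  have hterm : ∀ x : Fin d → ℤ, h (env k x) * theta β env k x =
      ∑ p : PolymerPath d n,
        (if x = p.vertex k then h (env k (p.vertex k)) * gibbsProb β env p else 0) := by
    intro x
    rw [theta, tsum_fintype, Finset.mul_sum]
    refine Finset.sum_congr rfl fun p _ => ?_
    by_cases hp : p.vertex k = x
    · rw [if_pos hp, if_pos hp.symm, ← hp]
    · rw [if_neg hp, if_neg (fun hx => hp hx.symm), mul_zero]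
  rw [gammaOf]
  calc (∑' x : Fin d → ℤ, h (env k x) * theta β env k x)
      = ∑' x : Fin d → ℤ, ∑ p : PolymerPath d n,
          (if x = p.vertex k then h (env k (p.vertex k)) * gibbsProb β env p else 0) := by
        exact tsum_congr hterm
    _ = ∑ p : PolymerPath d n, ∑' x : Fin d → ℤ,
          (if x = p.vertex k then h (env k (p.vertex k)) * gibbsProb β env p else 0) := by
        refine Summable.tsum_finsetSum fun p _ => ⟨_, hasSum_ite_eq (p.vertex k) _⟩
    _ = ∑ p : PolymerPath d n, h (env k (p.vertex k)) * gibbsProb β env p := by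
        refine Finset.sum_congr rfl fun p _ => tsum_ite_eq (p.vertex k) _
    _ = (∑ p : PolymerPath d n, h (env k (p.vertex k)) * pathWeight β env p)
          / partitionZ d n β env := by
        rw [Finset.sum_div]
        exact Finset.sum_congr rfl fun p _ => by rw [gibbsProb, mul_div_assoc]

lemma envUpd_self (env : Fin n → (Fin d → ℤ) → ℝ) (k : Fin n) (x : Fin d → ℤ) :
    envUpd env k x (env k x) = env := by
  funext j y
  unfold envUpd
  split
  · next hc => rw [hc.1, hc.2]
  · rfl

lemma envUpd_k (env : Fin n → (Fin d → ℤ) → ℝ) (k : Fin n) (x : Fin d → ℤ) (s : ℝ)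
    (y : Fin d → ℤ) : envUpd env k x s k y = if y = x then s else env k y := by
  unfold envUpd
  by_cases hy : y = x <;> simp [hy]

lemma energy_envUpd (env : Fin n → (Fin d → ℤ) → ℝ) (k : Fin n) (x : Fin d → ℤ) (s : ℝ)
    (p : PolymerPath d n) :
    energy (envUpd env k x s) p
      = energy env p + (if p.vertex k = x then s - env k x else 0) := by
  classical
  have hterm : ∀ j : Fin n, envUpd env k x s j (p.vertex j)
      = env j (p.vertex j)
        + (if j = k then (if p.vertex j = x then s - env j (p.vertex j) else 0) else 0) := by
    intro j
    unfold envUpd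
    by_cases hj : j = k
    · subst hj
      by_cases hv : p.vertex j = x
      · simp only [hv, and_self, if_true, if_pos rfl]
        ring
      · simp [hv]
    · simp [hj]
  rw [energy, energy]
  rw [Finset.sum_congr rfl fun j _ => hterm j, Finset.sum_add_distrib,
    Finset.sum_ite_eq' Finset.univ k
      (fun j => if p.vertex j = x then s - env j (p.vertex j) else 0)]
  simp only [Finset.mem_univ, if_true]
  by_cases hv : p.vertex k = x
  · rw [if_pos hv, if_pos hv, hv]
  · rw [if_neg hv, if_neg hv]

lemma pathWeight_envUpd (β : ℝ) (env : Fin n → (Fin d → ℤ) → ℝ) (k : Fin n)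
    (x : Fin d → ℤ) (s : ℝ) (p : PolymerPath d n) :
    pathWeight β (envUpd env k x s) p
      = pathWeight β env p
        * Real.exp (β * ((if p.vertex k = x then (1 : ℝ) else 0) * (s - env k x))) := by
  rw [pathWeight, pathWeight, energy_envUpd, mul_add, Real.exp_add]
  congr 2
  by_cases hv : p.vertex k = x <;> simp [hv]

end PPAux

namespace PPAux

variable {d n : ℕ}

lemma pathWeight_pos (β : ℝ) (env : Fin n → (Fin d → ℤ) → ℝ) (p : PolymerPath d n) :
    0 < pathWeight β env p := Real.exp_pos _

lemma hasDerivAt_gamma [Fintype (PolymerPath d n)] [Nonempty (PolymerPath d n)]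
    (h h' : ℝ → ℝ) (β : ℝ) (env : Fin n → (Fin d → ℤ) → ℝ) (k : Fin n) (x : Fin d → ℤ)
    (hd' : HasDerivAt h (h' (env k x)) (env k x)) :
    HasDerivAt (fun s => gammaOf h β (envUpd env k x s) k)
      (h' (env k x) * theta β env k x + β * h (env k x) * theta β env k x
        - β * theta β env k x * ∑' y : Fin d → ℤ, h (env k y) * theta β env k y)
      (env k x) := by
  classical
  have hZpos : 0 < partitionZ d n β env := by
    rw [partitionZ_eq]
    exact Finset.sum_pos (fun p _ => Real.exp_pos _) Finset.univ_nonempty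
  have hfun : (fun s => gammaOf h β (envUpd env k x s) k)
      = fun s =>
        (∑ p : PolymerPath d n,
          (if p.vertex k = x then h s else h (env k (p.vertex k)))
            * (pathWeight β env p
                * Real.exp (β * ((if p.vertex k = x then (1:ℝ) else 0) * (s - env k x)))))
        / (∑ p : PolymerPath d n,
            pathWeight β env p
              * Real.exp (β * ((if p.vertex k = x then (1:ℝ) else 0) * (s - env k x)))) := by
    funext s
    rw [gamma_eq h β (envUpd env k x s) k, partitionZ_eq]
    congr 1
    · refine Finset.sum_congr rfl fun p _ => ?_
      rw [pathWeight_envUpd, envUpd_k]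
      by_cases hv : p.vertex k = x <;> simp [hv]
    · exact Finset.sum_congr rfl fun p _ => pathWeight_envUpd β env k x s p
  rw [hfun]
  have hNd : HasDerivAt (fun s => ∑ p : PolymerPath d n,
      (if p.vertex k = x then h s else h (env k (p.vertex k)))
        * (pathWeight β env p
            * Real.exp (β * ((if p.vertex k = x then (1:ℝ) else 0) * (s - env k x)))))
      (∑ p : PolymerPath d n,
        if p.vertex k = x
        then h' (env k x) * pathWeight β env p + h (env k x) * (pathWeight β env p * β)
        else 0) (env k x) := by
    refine HasDerivAt.fun_sum fun p _ => ?_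
    by_cases hv : p.vertex k = x
    · simp only [hv, if_true]
      have hE : HasDerivAt (fun s => Real.exp (β * ((1:ℝ) * (s - env k x)))) β (env k x) := by
        have hi : HasDerivAt (fun s => β * ((1:ℝ) * (s - env k x))) (β * ((1:ℝ) * 1))
            (env k x) :=
          (((hasDerivAt_id (env k x)).sub_const (env k x)).const_mul (1:ℝ)).const_mul β
        simpa using hi.exp
      have hres := hd'.mul (hE.const_mul (pathWeight β env p))
      refine hres.congr_deriv ?_
      simp
    · simp only [hv, if_false]
      have heq : (fun s => h (env k (p.vertex k))
          * (pathWeight β env p * Real.exp (β * ((0:ℝ) * (s - env k x)))))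
          = fun _ => h (env k (p.vertex k)) * (pathWeight β env p * 1) := by
        funext s; simp
      rw [heq]
      exact hasDerivAt_const _ _
  have hZd : HasDerivAt (fun s => ∑ p : PolymerPath d n,
      pathWeight β env p
        * Real.exp (β * ((if p.vertex k = x then (1:ℝ) else 0) * (s - env k x))))
      (∑ p : PolymerPath d n, if p.vertex k = x then pathWeight β env p * β else 0)
      (env k x) := by
    refine HasDerivAt.fun_sum fun p _ => ?_
    by_cases hv : p.vertex k = x
    · simp only [hv, if_true]
      have hi : HasDerivAt (fun s => β * ((1:ℝ) * (s - env k x))) (β * ((1:ℝ) * 1))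
          (env k x) :=
        (((hasDerivAt_id (env k x)).sub_const (env k x)).const_mul (1:ℝ)).const_mul β
      have hres := (hi.exp).const_mul (pathWeight β env p)
      refine hres.congr_deriv ?_
      simp
    · simp only [hv, if_false]
      have heq : (fun s => pathWeight β env p
          * Real.exp (β * ((0:ℝ) * (s - env k x))))
          = fun _ => pathWeight β env p * 1 := by funext s; simp
      rw [heq]
      exact hasDerivAt_const _ _
  have hZval : (∑ p : PolymerPath d n,
      pathWeight β env p
        * Real.exp (β * ((if p.vertex k = x then (1:ℝ) else 0) * (env k x - env k x))))
      = partitionZ d n β env := by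
    rw [partitionZ_eq]
    exact Finset.sum_congr rfl fun p _ => by simp
  have hZne : (∑ p : PolymerPath d n,
      pathWeight β env p
        * Real.exp (β * ((if p.vertex k = x then (1:ℝ) else 0) * (env k x - env k x)))) ≠ 0 := by
    rw [hZval]; exact ne_of_gt hZpos
  have hdiv := hNd.div hZd hZne
  refine hdiv.congr_deriv ?_
  have hS4 : (∑ p : PolymerPath d n,
      pathWeight β env p
        * Real.exp (β * ((if p.vertex k = x then (1:ℝ) else 0) * (env k x - env k x))))
      = partitionZ d n β env := hZval
  have hS3 : (∑ p : PolymerPath d n,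
      (if p.vertex k = x then h (env k x) else h (env k (p.vertex k)))
        * (pathWeight β env p
            * Real.exp (β * ((if p.vertex k = x then (1:ℝ) else 0) * (env k x - env k x)))))
      = ∑ p : PolymerPath d n, h (env k (p.vertex k)) * pathWeight β env p := by
    refine Finset.sum_congr rfl fun p _ => ?_
    by_cases hv : p.vertex k = x <;> simp [hv]
  have hS1 : (∑ p : PolymerPath d n,
      if p.vertex k = x
      then h' (env k x) * pathWeight β env p + h (env k x) * (pathWeight β env p * β)
      else 0)
      = h' (env k x) * (∑ p : PolymerPath d n, if p.vertex k = x then pathWeight β env p else 0)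
        + β * (h (env k x)
            * (∑ p : PolymerPath d n, if p.vertex k = x then pathWeight β env p else 0)) := by
    rw [Finset.mul_sum, Finset.mul_sum, Finset.mul_sum, ← Finset.sum_add_distrib]
    refine Finset.sum_congr rfl fun p _ => ?_
    by_cases hv : p.vertex k = x <;> simp [hv] <;> ring
  have hS2 : (∑ p : PolymerPath d n, if p.vertex k = x then pathWeight β env p * β else 0)
      = β * (∑ p : PolymerPath d n, if p.vertex k = x then pathWeight β env p else 0) := by
    rw [Finset.mul_sum]
    refine Finset.sum_congr rfl fun p _ => ?_
    by_cases hv : p.vertex k = x <;> simp [hv] <;> ring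
  have hθx : theta β env k x
      = (∑ p : PolymerPath d n, if p.vertex k = x then pathWeight β env p else 0)
        / partitionZ d n β env := theta_eq β env k x
  have hγ : (∑' y : Fin d → ℤ, h (env k y) * theta β env k y)
      = (∑ p : PolymerPath d n, h (env k (p.vertex k)) * pathWeight β env p)
        / partitionZ d n β env := gamma_eq h β env k
  rw [hθx, hγ, hS1, hS2, hS3, hS4]
  have hZ0 : partitionZ d n β env ≠ 0 := ne_of_gt hZpos
  field_simp

end PPAux


/-- viewing `γ_k` as a function of the step-`k` environment values, its
partial derivative in `ω_{k,x}` equals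
`h'(ω_{k,x}) θ_{k,x} + β h(ω_{k,x}) θ_{k,x} − β θ_{k,x} ∑_y h(ω_{k,y}) θ_{k,y}`, and there is a
constant `C > 0`, depending only on the bounds `K ≥ sup|h|` and `K' ≥ sup|h'|`, such that
`∑_x (∂γ_k/∂ω_{k,x})² ≤ C β² α_k`. -/
theorem gamma_deriv_formula_and_sq_sum_le (K K' : ℝ) :
    ∃ C : ℝ, 0 < C ∧
      ∀ (d n : ℕ), 1 ≤ d → 1 ≤ n → ∀ (a b : ℝ), a < b →
      ∀ (h h' : ℝ → ℝ),
        (∀ x ∈ Set.Ioo a b, HasDerivAt h (h' x) x) →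
        (∀ x ∈ Set.Ioo a b, |h x| ≤ K) →
        (∀ x ∈ Set.Ioo a b, |h' x| ≤ K') →
      ∀ (β : ℝ), 1 ≤ β →
      ∀ (env : Fin n → (Fin d → ℤ) → ℝ) (k : Fin n),
        (∀ y : Fin d → ℤ, env k y ∈ Set.Ioo a b) →
        (∀ x : Fin d → ℤ,
          HasDerivAt (fun s => gammaOf h β (envUpd env k x s) k)
            (h' (env k x) * theta β env k x + β * h (env k x) * theta β env k x
              - β * theta β env k x * ∑' y : Fin d → ℤ, h (env k y) * theta β env k y)
            (env k x)) ∧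
        (∑' x : Fin d → ℤ,
            (h' (env k x) * theta β env k x + β * h (env k x) * theta β env k x
              - β * theta β env k x * ∑' y : Fin d → ℤ, h (env k y) * theta β env k y) ^ 2)
          ≤ C * β ^ 2 * alphaOf β env k := by
  classical
  refine ⟨(|K| + |K| + |K'| + 1) ^ 2, by positivity, ?_⟩
  intro d n hd hn a b hab h h' hderiv hK hK' β hβ env k henv
  haveI : Finite (PolymerPath d n) := PPAux.pp_finite d n
  haveI : Fintype (PolymerPath d n) := Fintype.ofFinite _
  haveI : Nonempty (PolymerPath d n) := PPAux.pp_nonempty hd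
  have hβ0 : (0:ℝ) < β := lt_of_lt_of_le one_pos hβ
  have hZpos : 0 < partitionZ d n β env := by
    rw [PPAux.partitionZ_eq]
    exact Finset.sum_pos (fun p _ => Real.exp_pos _) Finset.univ_nonempty
  have hθ : ∀ x : Fin d → ℤ, theta β env k x
      = (∑ p : PolymerPath d n, if p.vertex k = x then pathWeight β env p else 0)
        / partitionZ d n β env := fun x => PPAux.theta_eq β env k x
  have hγ : (∑' y : Fin d → ℤ, h (env k y) * theta β env k y)
      = (∑ p : PolymerPath d n, h (env k (p.vertex k)) * pathWeight β env p)
        / partitionZ d n β env := PPAux.gamma_eq h β env k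
  constructor
  · intro x
    exact PPAux.hasDerivAt_gamma h h' β env k x (hderiv (env k x) (henv x))
  · set S := Finset.image (fun p : PolymerPath d n => p.vertex k) Finset.univ with hS
    have hθ0 : ∀ x : Fin d → ℤ, x ∉ S → theta β env k x = 0 := by
      intro x hx
      rw [hθ x]
      have hz : (∑ p : PolymerPath d n, if p.vertex k = x then pathWeight β env p else 0)
          = 0 := by
        refine Finset.sum_eq_zero fun p _ => ?_
        have hne : p.vertex k ≠ x := fun hv =>
          hx (hv ▸ Finset.mem_image_of_mem _ (Finset.mem_univ p))
        simp [hne]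
      rw [hz, zero_div]
    have hγabs : |∑' y : Fin d → ℤ, h (env k y) * theta β env k y| ≤ |K| := by
      rw [hγ, abs_div, abs_of_pos hZpos, div_le_iff₀ hZpos]
      calc |∑ p : PolymerPath d n, h (env k (p.vertex k)) * pathWeight β env p|
          ≤ ∑ p : PolymerPath d n, |h (env k (p.vertex k)) * pathWeight β env p| :=
            Finset.abs_sum_le_sum_abs _ _
        _ ≤ ∑ p : PolymerPath d n, |K| * pathWeight β env p := by
            refine Finset.sum_le_sum fun p _ => ?_
            rw [abs_mul, abs_of_pos (PPAux.pathWeight_pos β env p)]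
            exact mul_le_mul_of_nonneg_right
              (le_trans (hK _ (henv (p.vertex k))) (le_abs_self K))
              (le_of_lt (PPAux.pathWeight_pos β env p))
        _ = |K| * partitionZ d n β env := by
            rw [← Finset.mul_sum, PPAux.partitionZ_eq]
    have hθnn : ∀ x : Fin d → ℤ, 0 ≤ theta β env k x := by
      intro x
      rw [hθ x]
      refine div_nonneg ?_ (le_of_lt hZpos)
      refine Finset.sum_nonneg fun p _ => ?_
      by_cases hv : p.vertex k = x <;> simp [hv, le_of_lt (PPAux.pathWeight_pos β env p)]
    have key : ∀ x : Fin d → ℤ,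
        (h' (env k x) * theta β env k x + β * h (env k x) * theta β env k x
          - β * theta β env k x * ∑' y : Fin d → ℤ, h (env k y) * theta β env k y) ^ 2
        ≤ (|K| + |K| + |K'| + 1) ^ 2 * β ^ 2 * theta β env k x ^ 2 := by
      intro x
      set γ := ∑' y : Fin d → ℤ, h (env k y) * theta β env k y with hγdef
      set θ := theta β env k x with hθdef
      set c := h' (env k x) + β * h (env k x) - β * γ with hc
      have hfac : h' (env k x) * θ + β * h (env k x) * θ - β * θ * γ = θ * c := by
        rw [hc]; ring
      rw [hfac]
      have h1 := abs_le.mp (le_trans (hK' _ (henv x)) (le_abs_self K'))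
      have h2 := abs_le.mp (le_trans (hK _ (henv x)) (le_abs_self K))
      have h3 := abs_le.mp hγabs
      have hKnn : (0:ℝ) ≤ |K| := abs_nonneg _
      have hK'nn : (0:ℝ) ≤ |K'| := abs_nonneg _
      have hb1 : (β - 1) * |K'| ≥ 0 := mul_nonneg (by linarith) hK'nn
      have hcb : c ≤ β * (|K| + |K| + |K'| + 1) := by
        have hm1 : β * h (env k x) ≤ β * |K| := by nlinarith
        have hm2 : -(β * γ) ≤ β * |K| := by nlinarith
        rw [hc]; nlinarith
      have hcb' : -(β * (|K| + |K| + |K'| + 1)) ≤ c := by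
        have hm1 : -(β * |K|) ≤ β * h (env k x) := by nlinarith
        have hm2 : -(β * |K|) ≤ -(β * γ) := by nlinarith
        rw [hc]; nlinarith
      have hsq : c ^ 2 ≤ (β * (|K| + |K| + |K'| + 1)) ^ 2 := sq_le_sq' hcb' hcb
      calc (θ * c) ^ 2 = c ^ 2 * θ ^ 2 := by ring
        _ ≤ (β * (|K| + |K| + |K'| + 1)) ^ 2 * θ ^ 2 :=
            mul_le_mul_of_nonneg_right hsq (sq_nonneg θ)
        _ = (|K| + |K| + |K'| + 1) ^ 2 * β ^ 2 * θ ^ 2 := by ring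
    have hsum1 : (∑' x : Fin d → ℤ,
        (h' (env k x) * theta β env k x + β * h (env k x) * theta β env k x
          - β * theta β env k x * ∑' y : Fin d → ℤ, h (env k y) * theta β env k y) ^ 2)
        = ∑ x ∈ S,
          (h' (env k x) * theta β env k x + β * h (env k x) * theta β env k x
            - β * theta β env k x * ∑' y : Fin d → ℤ, h (env k y) * theta β env k y) ^ 2 := by
      refine tsum_eq_sum fun x hx => ?_
      simp [hθ0 x hx]
    have hsum2 : alphaOf β env k = ∑ x ∈ S, theta β env k x ^ 2 := by
      refine tsum_eq_sum fun x hx => ?_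
      simp [hθ0 x hx]
    rw [hsum1, hsum2]
    calc (∑ x ∈ S,
        (h' (env k x) * theta β env k x + β * h (env k x) * theta β env k x
          - β * theta β env k x * ∑' y : Fin d → ℤ, h (env k y) * theta β env k y) ^ 2)
        ≤ ∑ x ∈ S, (|K| + |K| + |K'| + 1) ^ 2 * β ^ 2 * theta β env k x ^ 2 :=
          Finset.sum_le_sum fun x _ => key x
      _ = (|K| + |K| + |K'| + 1) ^ 2 * β ^ 2 * ∑ x ∈ S, theta β env k x ^ 2 := by
          rw [Finset.mul_sum]

end
end
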